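/- arXiv:1812.02488 — 3 statements merged into one kernel-verified Lean document; each statement's English description precedes it below -/
import Mathlib

section
/- Let n be a positive integer and r ∈ {1, 4} with d = n² + r squarefree and d ≡ 5 (mod 8), and let p be an odd prime dividing n. If h(d) = 1, then n = p in the case r = 4, and n = 2p in the case r = 1. (Consequently, a squarefree d ≡ 5 (mod 8) of the form n² + 4 or n² + 1 with class number 1 and with n having an odd prime factor must be of the form p² + 4 or 4p² + 1 for a prime p.) -/
/-- If `d` is squarefree and `d * q ^ 2` is an integer, then `q` is an integer. -/
lemma int_of_squarefree_mul_sq (d : ℕ) (hsf : Squarefree d) (q : ℚ) (z : ℤ)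
    (h : (d:ℚ) * q^2 = (z:ℚ)) : ∃ w : ℤ, (w:ℚ) = q := by
  have hden : (q.den : ℚ) ≠ 0 := by exact_mod_cast q.den_nz
  have hq := Rat.num_div_den q
  rw [← hq] at h
  field_simp at h
  -- h : (d:ℚ) * q.num^2 = z * q.den^2  (or some arrangement)
  have hint : (d:ℤ) * q.num^2 = z * (q.den:ℤ)^2 := by rw [mul_comm (z:ℤ)]; exact_mod_cast h
  have hdvd : (q.den:ℤ)^2 ∣ (d:ℤ) * q.num^2 := ⟨z, by linarith [hint]⟩
  have hdvdn : (q.den)^2 ∣ d * q.num.natAbs^2 := by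
    have := Int.natAbs_dvd_natAbs.mpr hdvd
    simpa [Int.natAbs_mul, Int.natAbs_pow] using this
  have hcop : Nat.Coprime (q.den^2) (q.num.natAbs^2) :=
    Nat.Coprime.pow _ _ (Nat.coprime_comm.mp q.reduced)
  have hdvdd : q.den^2 ∣ d := (Nat.Coprime.dvd_of_dvd_mul_right hcop hdvdn)
  have hunit : IsUnit q.den := hsf q.den (by rwa [← pow_two] )
  have hden1 : q.den = 1 := Nat.isUnit_iff.mp hunit
  exact ⟨q.num, by rw [← hq, hden1]; simp⟩

set_option maxHeartbeats 1000000 in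

/-- Descent lemma for `d = n² + 4`. -/
lemma descent4 (p n : ℕ) (hp : p.Prime) (hp3 : 3 ≤ p) (hn3 : 3 * p ≤ n) (hnodd : n % 2 = 1) :
    ∀ b : ℕ, ∀ a : ℕ, 0 < b →
      ((a:ℤ)^2 - ((n:ℤ)^2 + 4) * (b:ℤ)^2 = 4*(p:ℤ) ∨
       (a:ℤ)^2 - ((n:ℤ)^2 + 4) * (b:ℤ)^2 = -(4*(p:ℤ))) → False := by
  intro b
  induction b using Nat.strong_induction_on with
  | _ b IH =>
    intro a hb heq
    have hbpos : (0:ℤ) < (b:ℤ) := by exact_mod_cast hb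
    have h4 : (4 : ZMod 2) = 0 := by decide
    -- parity facts via ZMod 2
    have hn2 : ((n:ℕ) : ZMod 2) = 1 := by rw [← ZMod.natCast_mod, hnodd]; rfl
    have hsq2 : ∀ x : ZMod 2, x^2 = x := by decide
    have hab2 : ((a:ℕ) : ZMod 2) = ((b:ℕ) : ZMod 2) := by
      have h0 : (a:ZMod 2)^2 - ((1:ZMod 2)^2 + 4)*(b:ZMod 2)^2 = 0 := by
        rcases heq with h | h <;>
        [ (have h' := congrArg (fun z : ℤ => (z : ZMod 2)) h);
          (have h' := congrArg (fun z : ℤ => (z : ZMod 2)) h)] <;>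
        · push_cast at h'
          rw [hn2] at h'
          rw [h', h4]
          ring
      have h1 : ((1:ZMod 2)^2 + 4) = 1 := by decide
      rw [h1, one_mul, sub_eq_zero, hsq2, hsq2] at h0
      exact h0
    have hceven : (2:ℤ) ∣ ((a:ℤ) - (b:ℤ)*(n:ℤ)) := by
      have := (ZMod.intCast_zmod_eq_zero_iff_dvd ((a:ℤ) - (b:ℤ)*(n:ℤ)) 2).mp ?_
      · exact_mod_cast this
      · push_cast
        rw [hn2, hab2, mul_one, sub_self]
    have haeven : (2:ℤ) ∣ ((b:ℤ)*((n:ℤ)^2+4) - (a:ℤ)*(n:ℤ)) := by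
      have := (ZMod.intCast_zmod_eq_zero_iff_dvd ((b:ℤ)*((n:ℤ)^2+4) - (a:ℤ)*(n:ℤ)) 2).mp ?_
      · exact_mod_cast this
      · push_cast
        rw [hn2, hab2, h4]
        ring
    obtain ⟨k, hk⟩ := hceven
    obtain ⟨j, hj⟩ := haeven
    -- the new solution: j^2 - d k^2 = ∓4p
    have hkey : (j:ℤ)^2 - ((n:ℤ)^2+4)*(k:ℤ)^2 = -((a:ℤ)^2 - ((n:ℤ)^2+4)*(b:ℤ)^2) := by
      have e1 : (2*j)^2 - ((n:ℤ)^2+4)*(2*k)^2 =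
          (((n:ℤ)^2+4) - (n:ℤ)^2) * (((n:ℤ)^2+4)*(b:ℤ)^2 - (a:ℤ)^2) := by
        rw [← hj, ← hk]; ring
      nlinarith [e1]
    by_cases hk0 : k = 0
    · -- a = b n, so b² = p, impossible
      rw [hk0, mul_zero] at hk
      have ha : (a:ℤ) = (b:ℤ)*(n:ℤ) := by linarith
      rcases heq with h | h
      · nlinarith [sq_nonneg (b:ℤ), (show (0:ℤ) < (p:ℤ) by exact_mod_cast hp.pos)]
      · have hbp : (b:ℤ)^2 = (p:ℤ) := by nlinarith
        have hbbp : b*b = p := by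
          have : ((b*b : ℕ) :ℤ) = (p:ℤ) := by push_cast; nlinarith
          exact_mod_cast this
        have hdvd : b ∣ p := ⟨b, hbbp.symm⟩
        rcases hp.eq_one_or_self_of_dvd b hdvd with h' | h'
        · subst h'; simp at hbbp; omega
        · subst h'; nlinarith [hp3, hbbp]
    · by_cases hsmall : k.natAbs < b
      · -- recurse
        have hkpos : 0 < k.natAbs := Int.natAbs_pos.mpr hk0
        apply IH k.natAbs hsmall j.natAbs hkpos
        have hj2 : ((j.natAbs:ℤ))^2 = j^2 := by rw [← Int.abs_eq_natAbs, sq_abs]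
        have hk2 : ((k.natAbs:ℤ))^2 = k^2 := by rw [← Int.abs_eq_natAbs, sq_abs]
        rw [hj2, hk2, hkey]
        rcases heq with h | h <;> rw [h]
        · right; ring
        · left; ring
      · -- |a - bn| ≥ 2b : size contradiction
        push_neg at hsmall
        have h2b : 2*(b:ℤ) ≤ |(a:ℤ) - (b:ℤ)*(n:ℤ)| := by
          rw [hk, abs_mul]
          have hbk : (b:ℤ) ≤ |k| := by
            rw [Int.abs_eq_natAbs]
            exact_mod_cast hsmall
          have : |(2:ℤ)| = 2 := by norm_num
          rw [this]
          linarith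
        have hfact : ((a:ℤ) - (b:ℤ)*(n:ℤ)) * ((a:ℤ) + (b:ℤ)*(n:ℤ))
             = (a:ℤ)^2 - ((n:ℤ)^2+4)*(b:ℤ)^2 + 4*(b:ℤ)^2 := by ring
        have hapos : (0:ℤ) ≤ (a:ℤ) := Int.natCast_nonneg a
        have hnpos : (0:ℤ) < (n:ℤ) := by
          have : 0 < n := by omega
          exact_mod_cast this
        have hppos : (0:ℤ) < (p:ℤ) := by exact_mod_cast hp.pos
        have habs : |((a:ℤ) - (b:ℤ)*(n:ℤ)) * ((a:ℤ) + (b:ℤ)*(n:ℤ))| ≤ 4*(p:ℤ) + 4*(b:ℤ)^2 := by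
          have hsq4 : (0:ℤ) ≤ 4*(b:ℤ)^2 := by positivity
          rw [hfact]
          rcases heq with h | h <;> rw [h, abs_le] <;> constructor <;> linarith
        have hlow : 2*(b:ℤ) * ((b:ℤ)*(n:ℤ)) ≤ |((a:ℤ) - (b:ℤ)*(n:ℤ)) * ((a:ℤ) + (b:ℤ)*(n:ℤ))| := by
          rw [abs_mul]
          have h1 : |(a:ℤ) + (b:ℤ)*(n:ℤ)| = (a:ℤ) + (b:ℤ)*(n:ℤ) := abs_of_nonneg (by positivity)
          rw [h1]
          have h2 : (b:ℤ)*(n:ℤ) ≤ (a:ℤ) + (b:ℤ)*(n:ℤ) := by linarith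
          calc 2*(b:ℤ) * ((b:ℤ)*(n:ℤ)) ≤ 2*(b:ℤ) * ((a:ℤ) + (b:ℤ)*(n:ℤ)) := by
                apply mul_le_mul_of_nonneg_left h2 (by positivity)
          _ ≤ |(a:ℤ) - (b:ℤ)*(n:ℤ)| * ((a:ℤ) + (b:ℤ)*(n:ℤ)) := by
                apply mul_le_mul_of_nonneg_right h2b (by positivity)
        have hb1 : (1:ℤ) ≤ (b:ℤ) := hbpos
        have hnn : (3:ℤ)*(p:ℤ) ≤ (n:ℤ) := by exact_mod_cast hn3
        have hp3' : (3:ℤ) ≤ (p:ℤ) := by exact_mod_cast hp3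
        have key : 2*(b:ℤ)*((b:ℤ)*(n:ℤ)) ≤ 4*(p:ℤ) + 4*(b:ℤ)^2 := le_trans hlow habs
        have hb2 : (1:ℤ) ≤ (b:ℤ)^2 := by nlinarith [hb1]
        have key2 : 6*(p:ℤ)*(b:ℤ)^2 ≤ 4*(p:ℤ) + 4*(b:ℤ)^2 := by
          calc 6*(p:ℤ)*(b:ℤ)^2 = 2*(b:ℤ)^2*(3*(p:ℤ)) := by ring
          _ ≤ 2*(b:ℤ)^2*(n:ℤ) := by
              apply mul_le_mul_of_nonneg_left hnn (by positivity)
          _ = 2*(b:ℤ)*((b:ℤ)*(n:ℤ)) := by ring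
          _ ≤ _ := key
        have m1 : (0:ℤ) ≤ ((p:ℤ) - 3) * (b:ℤ)^2 := mul_nonneg (by linarith) (sq_nonneg _)
        have m2 : (0:ℤ) ≤ ((b:ℤ)^2 - 1) * (p:ℤ) := mul_nonneg (by linarith) (by linarith)
        have e1 : ((p:ℤ) - 3) * (b:ℤ)^2 = (p:ℤ)*(b:ℤ)^2 - 3*(b:ℤ)^2 := by ring
        have e2 : ((b:ℤ)^2 - 1) * (p:ℤ) = (p:ℤ)*(b:ℤ)^2 - (p:ℤ) := by ring
        have e3 : 6*(p:ℤ)*(b:ℤ)^2 = 6*((p:ℤ)*(b:ℤ)^2) := by ring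
        rw [e1] at m1; rw [e2] at m2; rw [e3] at key2
        linarith [m1, m2, key2, hb2, hp3']

set_option maxHeartbeats 1000000 in
/-- Descent lemma for `d = n² + 1`. -/
lemma descent1 (p n : ℕ) (hp : p.Prime) (hp3 : 3 ≤ p) (hn6 : 6 * p ≤ n) :
    ∀ b : ℕ, ∀ a : ℕ, 0 < b →
      ((a:ℤ)^2 - ((n:ℤ)^2 + 1) * (b:ℤ)^2 = 4*(p:ℤ) ∨
       (a:ℤ)^2 - ((n:ℤ)^2 + 1) * (b:ℤ)^2 = -(4*(p:ℤ))) → False := by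
  intro b
  induction b using Nat.strong_induction_on with
  | _ b IH =>
    intro a hb heq
    have hbpos : (0:ℤ) < (b:ℤ) := by exact_mod_cast hb
    set k : ℤ := (a:ℤ) - (b:ℤ)*(n:ℤ) with hk
    set j : ℤ := (b:ℤ)*((n:ℤ)^2+1) - (a:ℤ)*(n:ℤ) with hj
    have hkey : j^2 - ((n:ℤ)^2+1)*k^2 = -((a:ℤ)^2 - ((n:ℤ)^2+1)*(b:ℤ)^2) := by
      rw [hk, hj]; ring
    by_cases hk0 : k = 0
    · rw [hk] at hk0
      have ha : (a:ℤ) = (b:ℤ)*(n:ℤ) := by linarith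
      rcases heq with h | h
      · nlinarith [sq_nonneg (b:ℤ), (show (0:ℤ) < (p:ℤ) by exact_mod_cast hp.pos)]
      · have hbp : (b:ℤ)^2 = 4*(p:ℤ) := by nlinarith
        have hbbp : b*b = 4*p := by
          have : ((b*b : ℕ) :ℤ) = ((4*p : ℕ):ℤ) := by push_cast; nlinarith
          exact_mod_cast this
        have hpb : p ∣ b := (Nat.Prime.dvd_mul hp).mp ⟨4, by omega⟩ |>.elim id id
        obtain ⟨t, ht⟩ := hpb
        have h4 : p ∣ 2^2 := by
          refine ⟨t*t, ?_⟩
          have : p*t*(p*t) = 4*p := by rw [← ht]; exact hbbp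
          have hppos : 0 < p := hp.pos
          nlinarith [this]
        have := Nat.le_of_dvd (by norm_num) (hp.dvd_of_dvd_pow h4)
        omega
    · by_cases hsmall : k.natAbs < b
      · have hkpos : 0 < k.natAbs := Int.natAbs_pos.mpr hk0
        apply IH k.natAbs hsmall j.natAbs hkpos
        have hj2 : ((j.natAbs:ℤ))^2 = j^2 := by rw [← Int.abs_eq_natAbs, sq_abs]
        have hk2 : ((k.natAbs:ℤ))^2 = k^2 := by rw [← Int.abs_eq_natAbs, sq_abs]
        rw [hj2, hk2, hkey]
        rcases heq with h | h <;> rw [h]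
        · right; ring
        · left; ring
      · push_neg at hsmall
        have h2b : (b:ℤ) ≤ |k| := by
          rw [Int.abs_eq_natAbs]
          exact_mod_cast hsmall
        have hfact : k * ((a:ℤ) + (b:ℤ)*(n:ℤ))
             = (a:ℤ)^2 - ((n:ℤ)^2+1)*(b:ℤ)^2 + (b:ℤ)^2 := by rw [hk]; ring
        have hapos : (0:ℤ) ≤ (a:ℤ) := Int.natCast_nonneg a
        have hppos : (0:ℤ) < (p:ℤ) := by exact_mod_cast hp.pos
        have hnpos : (0:ℤ) < (n:ℤ) := by
          have : 0 < n := by omega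
          exact_mod_cast this
        have habs : |k * ((a:ℤ) + (b:ℤ)*(n:ℤ))| ≤ 4*(p:ℤ) + (b:ℤ)^2 := by
          have hsq4 : (0:ℤ) ≤ (b:ℤ)^2 := by positivity
          rw [hfact]
          rcases heq with h | h <;> rw [h, abs_le] <;> constructor <;> linarith
        have hlow : (b:ℤ) * ((b:ℤ)*(n:ℤ)) ≤ |k * ((a:ℤ) + (b:ℤ)*(n:ℤ))| := by
          rw [abs_mul]
          have h1 : |(a:ℤ) + (b:ℤ)*(n:ℤ)| = (a:ℤ) + (b:ℤ)*(n:ℤ) := abs_of_nonneg (by positivity)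
          rw [h1]
          have h2 : (b:ℤ)*(n:ℤ) ≤ (a:ℤ) + (b:ℤ)*(n:ℤ) := by linarith
          calc (b:ℤ) * ((b:ℤ)*(n:ℤ)) ≤ (b:ℤ) * ((a:ℤ) + (b:ℤ)*(n:ℤ)) := by
                apply mul_le_mul_of_nonneg_left h2 (by positivity)
          _ ≤ |k| * ((a:ℤ) + (b:ℤ)*(n:ℤ)) := by
                apply mul_le_mul_of_nonneg_right h2b (by positivity)
        have hb1 : (1:ℤ) ≤ (b:ℤ) := hbpos
        have hnn : (6:ℤ)*(p:ℤ) ≤ (n:ℤ) := by exact_mod_cast hn6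
        have hp3' : (3:ℤ) ≤ (p:ℤ) := by exact_mod_cast hp3
        have key : (b:ℤ)*((b:ℤ)*(n:ℤ)) ≤ 4*(p:ℤ) + (b:ℤ)^2 := le_trans hlow habs
        have hb2 : (1:ℤ) ≤ (b:ℤ)^2 := by nlinarith [hb1]
        have key2 : 6*(p:ℤ)*(b:ℤ)^2 ≤ 4*(p:ℤ) + (b:ℤ)^2 := by
          calc 6*(p:ℤ)*(b:ℤ)^2 = (b:ℤ)^2*(6*(p:ℤ)) := by ring
          _ ≤ (b:ℤ)^2*(n:ℤ) := by
              apply mul_le_mul_of_nonneg_left hnn (by positivity)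
          _ = (b:ℤ)*((b:ℤ)*(n:ℤ)) := by ring
          _ ≤ _ := key
        have m1 : (0:ℤ) ≤ ((p:ℤ) - 3) * (b:ℤ)^2 := mul_nonneg (by linarith) (sq_nonneg _)
        have m2 : (0:ℤ) ≤ ((b:ℤ)^2 - 1) * (p:ℤ) := mul_nonneg (by linarith) (by linarith)
        have e1 : ((p:ℤ) - 3) * (b:ℤ)^2 = (p:ℤ)*(b:ℤ)^2 - 3*(b:ℤ)^2 := by ring
        have e2 : ((b:ℤ)^2 - 1) * (p:ℤ) = (p:ℤ)*(b:ℤ)^2 - (p:ℤ) := by ring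
        have e3 : 6*(p:ℤ)*(b:ℤ)^2 = 6*((p:ℤ)*(b:ℤ)^2) := by ring
        rw [e1] at m1; rw [e2] at m2; rw [e3] at key2
        linarith [m1, m2, key2, hb2, hp3']

open NumberField

set_option maxHeartbeats 1000000 in
/-- Let `n` be a positive integer and `r ∈ {1, 4}` with `d = n² + r` squarefree and
`d ≡ 5 (mod 8)`, and let `p` be an odd prime dividing `n`. If the class number of `ℚ(√d)`
is `1`, then `n = p` in the case `r = 4`, and `n = 2p` in the case `r = 1`. -/
theorem eq_prime_of_classNumber_eq_one
    (n : ℕ) (hn : 0 < n) (r : ℕ) (hr : r = 1 ∨ r = 4)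
    (d : ℕ) (hd : d = n ^ 2 + r) (hsf : Squarefree d) (h5 : d % 8 = 5)
    (p : ℕ) (hp : p.Prime) (hpodd : Odd p) (hpn : p ∣ n)
    (K : Type) [Field K] [NumberField K] (sq : K) (hsq : sq ^ 2 = (d : K))
    (hrank : Module.finrank ℚ K = 2)
    (h1 : NumberField.classNumber K = 1) :
    (r = 4 → n = p) ∧ (r = 1 → n = 2 * p) := by
  have hp3 : 3 ≤ p := by
    have h2 := hp.two_le
    rcases hpodd with ⟨k, hk⟩
    omega
  have hd5 : 5 ≤ d := by omega
  -- d is not the square of a rational number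
  have hdnotsq : ∀ q : ℚ, q ^ 2 ≠ (d : ℚ) := by
    intro q hq
    have hqint : IsIntegral ℤ q := by
      refine ⟨Polynomial.X ^ 2 - Polynomial.C (d : ℤ), Polynomial.monic_X_pow_sub_C _ (by norm_num), ?_⟩
      simp [hq]
    obtain ⟨z, hz⟩ := IsIntegrallyClosed.isIntegral_iff.mp hqint
    have hzq : (z : ℚ) = q := hz
    have hz2 : z ^ 2 = (d : ℤ) := by
      have h' : ((z:ℚ)) ^ 2 = ((d:ℤ):ℚ) := by rw [hzq, hq]; push_cast; ring
      exact_mod_cast h'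
    have hnat : z.natAbs ^ 2 = d := by
      have : ((z.natAbs : ℤ)) ^ 2 = (d : ℤ) := by rw [← Int.abs_eq_natAbs, sq_abs, hz2]
      exact_mod_cast this
    have hu : IsUnit z.natAbs := hsf z.natAbs (by rw [← pow_two, hnat])
    have h1' := Nat.isUnit_iff.mp hu
    rw [h1'] at hnat
    simp at hnat
    omega
  have hsqne : sq ≠ 0 := by
    intro h
    rw [h] at hsq
    have hd0 : (d:K) = 0 := by rw [← hsq]; ring
    have : d = 0 := by exact_mod_cast hd0
    omega
  -- {1, sq} is a basis of K over ℚ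
  have hli : LinearIndependent ℚ ![(1:K), sq] := by
    rw [linearIndependent_fin2]
    constructor
    · simpa using hsqne
    · intro q hq
      simp only [Matrix.cons_val_one, Matrix.head_cons, Matrix.cons_val_zero] at hq
      have hq0 : q ≠ 0 := by
        intro h; rw [h, zero_smul] at hq; exact one_ne_zero hq.symm
      apply hdnotsq (1/q)
      have h2 : (q • sq)^2 = 1 := by rw [hq]; ring
      rw [smul_pow, hsq] at h2
      -- h2 : q^2 • (d:K) = 1
      have h3 : algebraMap ℚ K (q^2 * d) = algebraMap ℚ K 1 := by
        rw [map_one, ← h2, Algebra.smul_def, map_mul]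
        push_cast
        ring
      have h4 : q^2 * d = 1 := (algebraMap ℚ K).injective h3
      field_simp
      field_simp at h4
      linarith [h4]
  -- basis
  have hcard : Fintype.card (Fin 2) = Module.finrank ℚ K := by simp [hrank]
  set B : Module.Basis (Fin 2) ℚ K := basisOfLinearIndependentOfCardEqFinrank hli hcard with hB
  have hBcoe := coe_basisOfLinearIndependentOfCardEqFinrank hli hcard
  have hB0 : B 0 = 1 := by rw [hB, show (basisOfLinearIndependentOfCardEqFinrank hli hcard : Fin 2 → K) 0 = ![(1:K), sq] 0 from congrFun hBcoe 0]; rfl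
  have hB1 : B 1 = sq := by rw [hB, show (basisOfLinearIndependentOfCardEqFinrank hli hcard : Fin 2 → K) 1 = ![(1:K), sq] 1 from congrFun hBcoe 1]; rfl
  -- repr of explicit combinations
  have hrepr : ∀ u v : ℚ, B.repr (u • (1:K) + v • sq) = Finsupp.single 0 u + Finsupp.single 1 v := by
    intro u v
    rw [← hB0, ← hB1]
    rw [map_add, map_smul, map_smul, B.repr_self, B.repr_self]
    ext i
    simp [Finsupp.single_apply]
  have hdK : (d : K) = algebraMap ℚ K (d:ℚ) := by push_cast; ring
  have hss : sq * sq = algebraMap ℚ K (d:ℚ) := by rw [← pow_two, hsq, hdK]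
  have hmul0 : ∀ u v : ℚ, (u • (1:K) + v • sq) * B 0 = u • (1:K) + v • sq := by
    intro u v; rw [hB0, mul_one]
  have hmul1 : ∀ u v : ℚ, (u • (1:K) + v • sq) * B 1 = (v * (d:ℚ)) • (1:K) + u • sq := by
    intro u v
    rw [hB1]
    simp only [Algebra.smul_def, map_mul, mul_one]
    linear_combination (algebraMap ℚ K v) * hss
  -- trace and norm formulas
  have htrace : ∀ u v : ℚ, Algebra.trace ℚ K (u • (1:K) + v • sq) = 2 * u := by
    intro u v
    rw [Algebra.trace_eq_matrix_trace B, Matrix.trace_fin_two,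
      Algebra.leftMulMatrix_eq_repr_mul, Algebra.leftMulMatrix_eq_repr_mul,
      hmul0, hmul1, hrepr, hrepr]
    simp [Finsupp.single_apply]
    ring
  have hnorm : ∀ u v : ℚ, Algebra.norm ℚ (u • (1:K) + v • sq) = u^2 - (d:ℚ) * v^2 := by
    intro u v
    rw [Algebra.norm_eq_matrix_det B, Matrix.det_fin_two,
      Algebra.leftMulMatrix_eq_repr_mul, Algebra.leftMulMatrix_eq_repr_mul,
      Algebra.leftMulMatrix_eq_repr_mul, Algebra.leftMulMatrix_eq_repr_mul,
      hmul0, hmul1, hrepr, hrepr]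
    simp [Finsupp.single_apply]
    ring
  -- decomposition of an arbitrary element
  have hxdec : ∀ x : K, x = (B.repr x 0) • (1:K) + (B.repr x 1) • sq := by
    intro x
    conv_lhs => rw [← B.sum_repr x]
    rw [Fin.sum_univ_two, hB0, hB1]
  -- choose c with c² = r and p ∤ 2c
  obtain ⟨c, hcr, hpc⟩ : ∃ c : ℕ, c ^ 2 = r ∧ ¬ (p ∣ 2 * c) := by
    rcases hr with h | h
    · refine ⟨1, by rw [h]; norm_num, fun hdvd => ?_⟩
      have := Nat.le_of_dvd (by norm_num) hdvd
      omega
    · refine ⟨2, by rw [h]; norm_num, fun hdvd => ?_⟩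
      have h2 : p ∣ 2 ^ 2 := by simpa using hdvd
      have := Nat.le_of_dvd (by norm_num) (hp.dvd_of_dvd_pow h2)
      omega
  obtain ⟨t, htn⟩ := hpn
  have hdr : d = n ^ 2 + c ^ 2 := by rw [hd, hcr]
  have hn2 : n ^ 2 = p * (p * t ^ 2) := by rw [htn]; ring
  -- sq is an algebraic integer
  have hsqint : IsIntegral ℤ sq := by
    refine ⟨Polynomial.X ^ 2 - Polynomial.C (d : ℤ),
      Polynomial.monic_X_pow_sub_C _ (by norm_num), ?_⟩
    simp [hsq]
  set sq' : 𝓞 K := ⟨sq, hsqint⟩ with hsqdef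
  have hsq'coe : algebraMap (𝓞 K) K sq' = sq := rfl
  haveI hPID : IsPrincipalIdealRing (𝓞 K) := (NumberField.classNumber_eq_one_iff).mp h1
  -- the factorization identity in K and in 𝓞 K
  have hfacK : (sq - (c:K)) * (sq + (c:K)) = (p:K) * ((p * t ^ 2 : ℕ) : K) := by
    have h1 : ((d:ℕ):K) = ((n ^ 2 + c ^ 2 : ℕ) : K) := by rw [← hdr]
    have h2 : ((n ^ 2 : ℕ):K) = ((p * (p * t ^ 2) : ℕ) : K) := by rw [← hn2]
    push_cast at h1 h2 ⊢
    linear_combination hsq + h1 + h2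
  have hfac : (sq' - (c:𝓞 K)) * (sq' + (c:𝓞 K)) = (p:𝓞 K) * ((p * t ^ 2 : ℕ) : 𝓞 K) := by
    apply NumberField.RingOfIntegers.coe_injective
    rw [map_mul, map_sub, map_add, map_mul, map_natCast, map_natCast, map_natCast, hsq'coe]
    exact hfacK
  -- trace computations
  have htrsq : Algebra.trace ℚ K sq = 0 := by
    have h0 : (0:ℚ) • (1:K) + (1:ℚ) • sq = sq := by simp
    rw [← h0, htrace]
    ring
  have htrc : ∀ q : ℚ, Algebra.trace ℚ K (algebraMap ℚ K q) = 2 * q := by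
    intro q
    rw [Algebra.trace_algebraMap, hrank]
    simp [two_smul]
    ring
  have hptrace : ∀ γ : 𝓞 K, ∃ z : ℤ, Algebra.trace ℚ K (((p:𝓞 K) * γ : 𝓞 K) : K) = (p:ℚ) * z := by
    intro γ
    refine ⟨Algebra.trace ℤ _ γ, ?_⟩
    have hco : (((p:𝓞 K) * γ : 𝓞 K) : K) = (p:ℚ) • (γ:K) := by
      simp only [RingOfIntegers.coe_eq_algebraMap, map_mul, map_natCast, Algebra.smul_def]
    rw [hco, map_smul, Algebra.coe_trace_int, smul_eq_mul]
  have hnd1 : ¬ ((p:𝓞 K) ∣ (sq' - (c:𝓞 K))) := by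
    rintro ⟨γ, hγ⟩
    obtain ⟨z, hz⟩ := hptrace γ
    rw [← hγ] at hz
    have hco : ((sq' - (c:𝓞 K) : 𝓞 K) : K) = sq - algebraMap ℚ K (c:ℚ) := by
      simp only [RingOfIntegers.coe_eq_algebraMap, map_sub, map_natCast, hsq'coe]
    rw [hco, map_sub, htrsq, htrc] at hz
    have hzz : (p:ℤ) * z = -(2*c) := by
      exact_mod_cast (show (p:ℚ)*(z:ℚ) = -(2*(c:ℚ)) by linarith [hz])
    have : (p:ℤ) ∣ ((2*c : ℕ) : ℤ) := ⟨-z, by push_cast; linarith⟩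
    exact hpc (by exact_mod_cast this)
  have hnd2 : ¬ ((p:𝓞 K) ∣ (sq' + (c:𝓞 K))) := by
    rintro ⟨γ, hγ⟩
    obtain ⟨z, hz⟩ := hptrace γ
    rw [← hγ] at hz
    have hco : ((sq' + (c:𝓞 K) : 𝓞 K) : K) = sq + algebraMap ℚ K (c:ℚ) := by
      simp only [RingOfIntegers.coe_eq_algebraMap, map_add, map_natCast, hsq'coe]
    rw [hco, map_add, htrsq, htrc] at hz
    have hzz : (p:ℤ) * z = 2*c := by
      exact_mod_cast (show (p:ℚ)*(z:ℚ) = 2*(c:ℚ) by linarith [hz])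
    have : (p:ℤ) ∣ ((2*c : ℕ) : ℤ) := ⟨z, by push_cast; linarith⟩
    exact hpc (by exact_mod_cast this)
  -- p is neither a unit nor prime in 𝓞 K
  have hpcoeK : ((p:𝓞 K) : K) = algebraMap ℚ K (p:ℚ) := by
    simp only [RingOfIntegers.coe_eq_algebraMap, map_natCast]
  have hpnotunit : ¬ IsUnit (p:𝓞 K) := by
    intro hu
    have habs := NumberField.isUnit_iff_norm.mp hu
    rw [RingOfIntegers.coe_norm, hpcoeK, Algebra.norm_algebraMap, hrank] at habs
    have hple : (3:ℚ) ≤ (p:ℚ) := by exact_mod_cast hp3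
    rw [abs_of_nonneg (by positivity)] at habs
    nlinarith
  have hpnotprime : ¬ Prime (p:𝓞 K) := by
    intro hpr
    rcases hpr.2.2 _ _ ⟨_, hfac⟩ with h | h
    · exact hnd1 h
    · exact hnd2 h
  have hpne0 : (p:𝓞 K) ≠ 0 := Nat.cast_ne_zero.mpr (by omega)
  have hnotirr : ¬ Irreducible (p:𝓞 K) := fun hirr =>
    hpnotprime ((UniqueFactorizationMonoid.irreducible_iff_prime).mp hirr)
  obtain ⟨α, β, hαβ, hαu, hβu⟩ :
      ∃ α β : 𝓞 K, (p:𝓞 K) = α * β ∧ ¬IsUnit α ∧ ¬IsUnit β := by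
    rw [irreducible_iff] at hnotirr
    push_neg at hnotirr
    obtain ⟨a, b, hab, hna, hnb⟩ := hnotirr hpnotunit
    exact ⟨a, b, hab, hna, hnb⟩
  -- norms
  obtain ⟨Nα, hNα⟩ : ∃ z : ℤ, (z:ℚ) = Algebra.norm ℚ ((α : 𝓞 K) : K) :=
    ⟨Algebra.norm ℤ α, Algebra.coe_norm_int α⟩
  obtain ⟨Nβ, hNβ⟩ : ∃ z : ℤ, (z:ℚ) = Algebra.norm ℚ ((β : 𝓞 K) : K) :=
    ⟨Algebra.norm ℤ β, Algebra.coe_norm_int β⟩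
  have hNprod : Nα * Nβ = (p:ℤ)^2 := by
    have hco : (α:K) * (β:K) = algebraMap ℚ K (p:ℚ) := by
      rw [← hpcoeK, hαβ]
      simp only [RingOfIntegers.coe_eq_algebraMap, map_mul]
    have : Algebra.norm ℚ ((α:K)) * Algebra.norm ℚ ((β:K)) = (p:ℚ)^2 := by
      rw [← map_mul, hco, Algebra.norm_algebraMap, hrank]
    rw [← hNα, ← hNβ] at this
    exact_mod_cast this
  have hNαu : Nα.natAbs ≠ 1 := by
    intro h
    apply hαu
    rw [NumberField.isUnit_iff_norm, RingOfIntegers.coe_norm, ← hNα]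
    rw [← Int.cast_abs, Int.abs_eq_natAbs, h]
    norm_num
  have hNβu : Nβ.natAbs ≠ 1 := by
    intro h
    apply hβu
    rw [NumberField.isUnit_iff_norm, RingOfIntegers.coe_norm, ← hNβ]
    rw [← Int.cast_abs, Int.abs_eq_natAbs, h]
    norm_num
  have hNabs : Nα.natAbs * Nβ.natAbs = p^2 := by
    have := congrArg Int.natAbs hNprod
    simpa [Int.natAbs_mul, Int.natAbs_pow] using this
  have hNa : Nα.natAbs = p := by
    obtain ⟨i, hi2, hieq⟩ := (Nat.dvd_prime_pow hp).mp ⟨Nβ.natAbs, hNabs.symm⟩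
    interval_cases i
    · simp at hieq; exact absurd hieq hNαu
    · simpa using hieq
    · exfalso
      apply hNβu
      rw [hieq] at hNabs
      have hppos : 0 < p^2 := by positivity
      have h2 : p^2 * Nβ.natAbs = p^2 * 1 := by rw [mul_one]; exact hNabs
      exact Nat.eq_of_mul_eq_mul_left hppos h2
  -- coordinates of α
  set u : ℚ := B.repr (α:K) 0 with hu
  set v : ℚ := B.repr (α:K) 1 with hv
  have hαdec : (α:K) = u • (1:K) + v • sq := hxdec (α:K)
  obtain ⟨z, hz⟩ : ∃ z : ℤ, (z:ℚ) = 2 * u := by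
    refine ⟨Algebra.trace ℤ _ α, ?_⟩
    rw [Algebra.coe_trace_int]
    have h' := htrace u v
    rw [← hαdec] at h'
    rw [h']
  have hNα' : (Nα:ℚ) = u^2 - (d:ℚ) * v^2 := by
    have h' := hnorm u v
    rw [← hαdec] at h'
    rw [hNα, h']
  have hDint : (d:ℚ) * (2*v)^2 = ((z^2 - 4*Nα : ℤ):ℚ) := by
    push_cast
    linear_combination (-(z:ℚ) - 2*u) * hz + 4 * hNα'
  obtain ⟨w, hw⟩ := int_of_squarefree_mul_sq d hsf (2*v) (z^2 - 4*Nα) hDint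
  have hkeyZ : z^2 - (d:ℤ) * w^2 = 4 * Nα := by
    have hQ : (z:ℚ)^2 - (d:ℚ) * (w:ℚ)^2 = 4 * (Nα:ℚ) := by
      rw [hw]
      push_cast at hDint
      linarith [hDint]
    exact_mod_cast hQ
  have hNsign : Nα = (p:ℤ) ∨ Nα = -(p:ℤ) := by
    rcases Int.natAbs_eq Nα with h | h
    · left; rw [h, hNa]
    · right; rw [h, hNa]
  have hpm2 : p % 2 = 1 := Nat.odd_iff.mp hpodd
  have hw0 : w ≠ 0 := by
    intro h0
    rw [h0] at hkeyZ
    simp at hkeyZ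
    rcases hNsign with h | h
    · rw [h] at hkeyZ
      have hzn : z.natAbs ^ 2 = 4 * p := by
        have h'' : ((z.natAbs:ℤ))^2 = ((4*p:ℕ):ℤ) := by
          rw [← Int.abs_eq_natAbs, sq_abs]
          push_cast
          linarith [hkeyZ]
        exact_mod_cast h''
      have hpz : p ∣ z.natAbs := hp.dvd_of_dvd_pow (⟨4, by rw [hzn]; ring⟩ : p ∣ z.natAbs^2)
      have hdvd2 : p^2 ∣ z.natAbs^2 := pow_dvd_pow_of_dvd hpz 2
      rw [hzn] at hdvd2
      obtain ⟨k, hk4⟩ := hdvd2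
      have h4 : 4 = p * k := by
        apply Nat.eq_of_mul_eq_mul_left hp.pos
        calc p*4 = 4*p := by ring
        _ = p^2*k := hk4
        _ = p*(p*k) := by ring
      have hple := Nat.le_of_dvd (by norm_num) (⟨k, h4⟩ : p ∣ 4)
      interval_cases p <;> omega
    · rw [h] at hkeyZ
      have hppos : (0:ℤ) < (p:ℤ) := by exact_mod_cast hp.pos
      nlinarith [sq_nonneg z, hkeyZ]
  have ha2 : ((z.natAbs:ℤ))^2 = z^2 := by rw [← Int.abs_eq_natAbs, sq_abs]
  have hb2 : ((w.natAbs:ℤ))^2 = w^2 := by rw [← Int.abs_eq_natAbs, sq_abs]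
  constructor
  · -- r = 4 : show n = p
    intro hr4
    by_contra hne
    have hnodd : n % 2 = 1 := by
      rcases Nat.even_or_odd n with ⟨m, hm⟩ | ho
      · exfalso
        have h2 : n^2 = 4*(m*m) := by rw [hm]; ring
        have hd' : d = 4*(m*m) + 4 := by rw [hd, hr4, h2]
        obtain ⟨M, hM⟩ : ∃ M, m*m = M := ⟨_, rfl⟩
        rw [hM] at hd'
        omega
      · exact Nat.odd_iff.mp ho
    have htodd : t % 2 = 1 := by
      rcases Nat.even_or_odd t with ⟨m, hm⟩ | ho
      · exfalso
        have h2 : n = 2*(p*m) := by rw [htn, hm]; ring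
        obtain ⟨M, hM⟩ : ∃ M, p*m = M := ⟨_, rfl⟩
        rw [hM] at h2
        omega
      · exact Nat.odd_iff.mp ho
    have ht1 : t ≠ 1 := fun h => hne (by rw [htn, h, mul_one])
    have ht0 : t ≠ 0 := by
      intro h
      rw [h, mul_zero] at htn
      omega
    have ht3 : 3 ≤ t := by omega
    have h3p : 3*p ≤ n := by
      rw [htn]
      calc 3*p = p*3 := by ring
      _ ≤ p*t := Nat.mul_le_mul (Nat.le_refl p) ht3
    refine descent4 p n hp hp3 h3p hnodd w.natAbs z.natAbs (Int.natAbs_pos.mpr hw0) ?_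
    have hd4 : ((n:ℤ)^2 + 4) = (d:ℤ) := by
      have : ((d:ℕ):ℤ) = ((n^2 + 4 : ℕ):ℤ) := by rw [hd, hr4]
      push_cast at this
      linarith
    rw [ha2, hb2, hd4]
    rcases hNsign with h | h
    · left; rw [hkeyZ, h]
    · right; rw [hkeyZ, h]; ring
  · -- r = 1 : show n = 2p
    intro hr1
    by_contra hne
    have hneven : n % 2 = 0 := by
      rcases Nat.even_or_odd n with he | ⟨m, hm⟩
      · exact Nat.even_iff.mp he
      · exfalso
        have h2 : n^2 = 4*(m*m) + 4*m + 1 := by rw [hm]; ring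
        have hd' : d = 4*(m*m) + 4*m + 2 := by rw [hd, hr1, h2]
        obtain ⟨M, hM⟩ : ∃ M, m*m = M := ⟨_, rfl⟩
        rw [hM] at hd'
        omega
    obtain ⟨m, hm⟩ : ∃ m, n = 2*m := ⟨n/2, by omega⟩
    have hmodd : m % 2 = 1 := by
      rcases Nat.even_or_odd m with ⟨j, hj⟩ | ho
      · exfalso
        have h2 : n^2 = 16*(j*j) := by rw [hm, hj]; ring
        have hd' : d = 16*(j*j) + 1 := by rw [hd, hr1, h2]
        obtain ⟨M, hM⟩ : ∃ M, j*j = M := ⟨_, rfl⟩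
        rw [hM] at hd'
        omega
      · exact Nat.odd_iff.mp ho
    have hpm : p ∣ m := by
      rcases (Nat.Prime.dvd_mul hp).mp (show p ∣ 2*m by rw [← hm]; exact ⟨t, htn⟩) with h | h
      · exfalso
        have := Nat.le_of_dvd (by norm_num) h
        omega
      · exact h
    obtain ⟨s, hs⟩ := hpm
    have hsodd : s % 2 = 1 := by
      rcases Nat.even_or_odd s with ⟨j, hj⟩ | ho
      · exfalso
        have h2 : m = 2*(p*j) := by rw [hs, hj]; ring
        obtain ⟨M, hM⟩ : ∃ M, p*j = M := ⟨_, rfl⟩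
        rw [hM] at h2
        omega
      · exact Nat.odd_iff.mp ho
    have hs1 : s ≠ 1 := fun h => hne (by rw [hm, hs, h, mul_one])
    have hs0 : s ≠ 0 := by
      intro h
      rw [h, mul_zero] at hs
      omega
    have hs3 : 3 ≤ s := by omega
    have h6p : 6*p ≤ n := by
      rw [hm, hs]
      calc 6*p = 2*(p*3) := by ring
      _ ≤ 2*(p*s) := by
          have := Nat.mul_le_mul (Nat.le_refl p) hs3
          omega
    refine descent1 p n hp hp3 h6p w.natAbs z.natAbs (Int.natAbs_pos.mpr hw0) ?_
    have hd1 : ((n:ℤ)^2 + 1) = (d:ℤ) := by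
      have : ((d:ℕ):ℤ) = ((n^2 + 1 : ℕ):ℤ) := by rw [hd, hr1]
      push_cast at this
      linarith
    rw [ha2, hb2, hd1]
    rcases hNsign with h | h
    · left; rw [hkeyZ, h]
    · right; rw [hkeyZ, h]; ring
end

section
/- Let n be a positive integer and r ∈ {4, −4} (with n ≥ 5 if r = −4), and suppose d = n² + r is squarefree with d > 1. Then ε = (n + √d)/2 lies in the ring of integers O of ℚ(√d) and is its fundamental unit: ε > 1, every unit of O equals ε^m or −ε^m for some integer m, and the norm N(ε) = ε·ε′ equals −sgn(r) (i.e. N(ε) = −1 if r = 4 and N(ε) = 1 if r = −4). -/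
open Polynomial in
lemma DegHelp.int_of_quad {x : ℝ} (B C : ℤ) (h : x^2 + B*x + C = 0) : IsIntegral ℤ x := by
  refine ⟨X^2 + Polynomial.C B * X + Polynomial.C C, ?_, ?_⟩
  · rw [add_assoc]
    exact Polynomial.monic_X_pow_add
      (lt_of_le_of_lt (Polynomial.degree_linear_le) (by norm_num))
  · simp only [Polynomial.eval₂_add, Polynomial.eval₂_mul, Polynomial.eval₂_pow,
      Polynomial.eval₂_X, Polynomial.eval₂_C]
    rw [show (algebraMap ℤ ℝ) B = (B:ℝ) from rfl, show (algebraMap ℤ ℝ) C = (C:ℝ) from rfl]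
    linear_combination h

lemma DegHelp.rat_int {x : ℚ} (h : IsIntegral ℤ (x:ℝ)) : ∃ z : ℤ, (z:ℚ) = x := by
  have h2 : IsIntegral ℤ x := by
    rw [show ((x:ℝ)) = algebraMap ℚ ℝ x by simp] at h
    exact (isIntegral_algebraMap_iff (algebraMap ℚ ℝ).injective).mp h
  exact IsIntegrallyClosed.isIntegral_iff.mp h2

lemma DegHelp.sqrt_irr {d : ℤ} (hd1 : 1 < d) (hsf : Squarefree d) :
    Irrational (Real.sqrt d) := by
  rw [irrational_sqrt_intCast_iff]
  constructor
  · rintro ⟨k, hk⟩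
    have hu : IsUnit k := hsf k ⟨1, by linarith [hk]⟩
    rw [Int.isUnit_iff] at hu
    rcases hu with h | h <;> subst h <;> omega
  · omega

open Polynomial in
/-- Extraction: if `a + b√d` is integral (b ≠ 0), then `2a`, `2b`, `a²-db²` are integers. -/
lemma DegHelp.ext {d : ℤ} (hd1 : 1 < d) (hsf : Squarefree d) {s : ℝ}
    (hs2 : s ^ 2 = (d:ℝ)) (hirr : Irrational s) {a b : ℚ} (hb : b ≠ 0)
    (hint : IsIntegral ℤ ((a:ℝ) + (b:ℝ) * s)) :
    ∃ P Q N : ℤ, (P:ℚ) = 2*a ∧ (Q:ℚ) = 2*b ∧ (N:ℚ) = a^2 - (d:ℚ)*b^2 := by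
  set u : ℝ := (a:ℝ) + (b:ℝ) * s with hu
  have hu_irr : Irrational u := (hirr.ratCast_mul hb).ratCast_add (q := a)
  set c1 : ℚ := -(2*a) with hc1
  set c0 : ℚ := a^2 - (d:ℚ)*b^2 with hc0
  set f : ℚ[X] := X^2 + C c1 * X + C c0 with hf
  have hfm : f.Monic := by
    rw [hf, add_assoc]
    exact Polynomial.monic_X_pow_add
      (lt_of_le_of_lt (Polynomial.degree_linear_le) (by norm_num))
  have hfdeg : f.natDegree = 2 := by
    have h1 : f.degree = 2 := by
      rw [hf, add_assoc]
      rw [Polynomial.degree_add_eq_left_of_degree_lt]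
      · exact Polynomial.degree_X_pow 2
      · rw [Polynomial.degree_X_pow]
        exact lt_of_le_of_lt (Polynomial.degree_linear_le) (by norm_num)
    exact Polynomial.natDegree_eq_of_degree_eq_some h1
  have hf0 : Polynomial.aeval u f = 0 := by
    rw [hf]
    simp only [map_add, map_mul, map_pow, Polynomial.aeval_X, Polynomial.aeval_C]
    rw [show (algebraMap ℚ ℝ) c1 = (c1:ℝ) from rfl, show (algebraMap ℚ ℝ) c0 = (c0:ℝ) from rfl]
    rw [hc1, hc0]
    push_cast
    linear_combination (b:ℝ)^2 * hs2
  have huQ : IsIntegral ℚ u := ⟨f, hfm, hf0⟩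
  have hdvd : minpoly ℚ u ∣ f := minpoly.dvd ℚ u hf0
  have hnotrange : u ∉ (algebraMap ℚ ℝ).range := by
    rintro ⟨q, hq⟩
    exact hu_irr ⟨q, by simpa using hq⟩
  have hmdeg : (minpoly ℚ u).natDegree = 2 := by
    have h2 : 2 ≤ (minpoly ℚ u).natDegree := (minpoly.two_le_natDegree_iff huQ).mpr hnotrange
    have hle : (minpoly ℚ u).natDegree ≤ 2 := by
      have := Polynomial.natDegree_le_of_dvd hdvd hfm.ne_zero
      omega
    omega
  have hmono : (minpoly ℚ u).Monic := minpoly.monic huQ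
  have heq : minpoly ℚ u = f := by
    obtain ⟨g, hg⟩ := hdvd
    have hgm : g.Monic := hmono.of_mul_monic_left (hg ▸ hfm)
    have hdeg : g.natDegree = 0 := by
      have := Polynomial.natDegree_mul (hmono.ne_zero) (hgm.ne_zero)
      rw [← hg, hfdeg, hmdeg] at this
      omega
    have : g = 1 := hgm.natDegree_eq_zero.mp hdeg
    rw [hg, this, mul_one]
  -- u is integral over ℤ, so minpoly over ℚ has integer coefficients
  have hmap : minpoly ℚ u = (minpoly ℤ u).map (algebraMap ℤ ℚ) :=
    minpoly.isIntegrallyClosed_eq_field_fractions' ℚ hint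
  have hcoeff : ∀ k, f.coeff k = ((minpoly ℤ u).coeff k : ℚ) := by
    intro k
    rw [← heq, hmap, Polynomial.coeff_map]
    rfl
  have hco1 : f.coeff 1 = c1 := by
    rw [hf]; simp
  have hco0 : f.coeff 0 = c0 := by
    rw [hf]; simp
  -- P := -(coeff 1), N := coeff 0
  have hP : ((-(minpoly ℤ u).coeff 1 : ℤ) : ℚ) = 2*a := by
    push_cast
    rw [← hcoeff 1, hco1, hc1]; ring
  have hN : (((minpoly ℤ u).coeff 0 : ℤ) : ℚ) = a^2 - (d:ℚ)*b^2 := by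
    rw [← hcoeff 0, hco0]
  -- now get Q from squarefreeness
  set P : ℤ := -(minpoly ℤ u).coeff 1
  set N : ℤ := (minpoly ℤ u).coeff 0
  set q : ℚ := 2*b with hq
  have hkey : (d:ℚ) * q^2 = ((P^2 - 4*N : ℤ) : ℚ) := by
    push_cast
    rw [hP, hN, hq]; ring
  set M : ℤ := P^2 - 4*N
  have hZkey : d * q.num^2 = M * (q.den:ℤ)^2 := by
    have hden : ((q.den:ℚ)) ≠ 0 := by exact_mod_cast q.den_nz
    have h1 : (q.num:ℚ) = q * q.den := by
      rw [Rat.mul_den_eq_num]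
    have : (d:ℚ) * (q.num:ℚ)^2 = (M:ℚ) * (q.den:ℚ)^2 := by
      rw [h1]
      calc (d:ℚ) * (q*q.den)^2 = ((d:ℚ)*q^2) * q.den^2 := by ring
        _ = (M:ℚ) * (q.den:ℚ)^2 := by rw [hkey]
    exact_mod_cast this
  have hdvd2 : ((q.den:ℤ))^2 ∣ d * q.num^2 := ⟨M, by linear_combination hZkey⟩
  have hcop : IsCoprime (q.den:ℤ) q.num := by
    rw [Int.isCoprime_iff_gcd_eq_one, Int.gcd]
    simpa [Nat.coprime_comm] using q.reduced
  have hdvdd : ((q.den:ℤ))^2 ∣ d :=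
    (hcop.pow).dvd_of_dvd_mul_right (by rwa [mul_comm] at hdvd2)
  have hden1 : q.den = 1 := by
    have := hsf (q.den:ℤ) (by rwa [← sq])
    rw [Int.isUnit_iff] at this
    omega
  refine ⟨P, q.num, N, hP, ?_, hN⟩
  rw [(Rat.den_eq_one_iff q).mp hden1, hq]

/-- Full unit extraction: unit `a + b√d` (b≠0) gives `(P + Q√d)/2` with `P² - dQ² = ±4`. -/
lemma DegHelp.unit_ext {d : ℤ} (hd1 : 1 < d) (hsf : Squarefree d) {s : ℝ}
    (hs2 : s ^ 2 = (d:ℝ)) (hirr : Irrational s) {a b : ℚ} (hb : b ≠ 0)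
    (hint : IsIntegral ℤ ((a:ℝ) + (b:ℝ) * s))
    (hinv : IsIntegral ℤ ((a:ℝ) + (b:ℝ) * s)⁻¹) :
    ∃ P Q N : ℤ, (N = 1 ∨ N = -1) ∧ (P:ℚ) = 2*a ∧ (Q:ℚ) = 2*b ∧
      P^2 - d*Q^2 = 4*N := by
  obtain ⟨P, Q, N, hP, hQ, hN⟩ := DegHelp.ext hd1 hsf hs2 hirr hb hint
  set Nq : ℚ := a^2 - (d:ℚ)*b^2 with hNqdef
  have hNq0 : Nq ≠ 0 := by
    intro h0
    have h1 : (s - (a/b:ℚ)) * (s + (a/b:ℚ)) = 0 := by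
      push_cast
      have hbR : (b:ℝ) ≠ 0 := by exact_mod_cast hb
      have : (a:ℝ)^2 - (d:ℝ)*(b:ℝ)^2 = 0 := by exact_mod_cast h0
      field_simp
      linear_combination (b:ℝ)^2 * hs2 - this
    rcases mul_eq_zero.mp h1 with h2 | h2
    · exact hirr.ne_rat (a/b) (by push_cast at h2 ⊢; linarith)
    · exact hirr.ne_rat (-(a/b)) (by push_cast at h2 ⊢; linarith)
  have hb' : -b/Nq ≠ 0 := by
    simp only [ne_eq, div_eq_zero_iff, neg_eq_zero]
    tauto
  have hmul : ((a:ℝ) + (b:ℝ)*s) * (((a/Nq : ℚ):ℝ) + ((-b/Nq : ℚ):ℝ) * s) = 1 := by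
    have hNqR : ((Nq:ℚ):ℝ) ≠ 0 := by exact_mod_cast hNq0
    push_cast [hNqdef] at hNqR ⊢
    field_simp
    have hI : ((a:ℝ)^2 - (b:ℝ)^2*(d:ℝ)) * ((a:ℝ)^2 - (b:ℝ)^2*(d:ℝ))⁻¹ = 1 :=
      mul_inv_cancel₀ (by intro h; apply hNqR; linear_combination h)
    linear_combination (-(b:ℝ)^2*((a:ℝ)^2 - (b:ℝ)^2*(d:ℝ))⁻¹) * hs2 + hI
  have hinv2 : IsIntegral ℤ (((a/Nq : ℚ):ℝ) + ((-b/Nq : ℚ):ℝ) * s) := by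
    rw [eq_inv_of_mul_eq_one_right hmul]
    exact hinv
  obtain ⟨P', Q', N', _, _, hN'⟩ := DegHelp.ext hd1 hsf hs2 hirr hb' hinv2
  have hNN' : N * N' = 1 := by
    have hq : (N:ℚ) * (N':ℚ) = 1 := by
      rw [hN, hN']
      field_simp
      ring
    exact_mod_cast hq
  have hNunit : N = 1 ∨ N = -1 := Int.isUnit_iff.mp (IsUnit.of_mul_eq_one _ hNN')
  refine ⟨P, Q, N, hNunit, hP, hQ, ?_⟩
  have : (P:ℚ)^2 - (d:ℚ)*(Q:ℚ)^2 = 4*(N:ℚ) := by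
    rw [hP, hQ, hN]; ring
  exact_mod_cast this

set_option maxHeartbeats 1000000 in
/-- Minimality: any unit `w > 1` is at least `(n+√d)/2`. -/
lemma DegHelp.min_lemma (n : ℕ) (hn : 0 < n) (r : ℤ) (hr : r = 4 ∨ r = -4)
    (hn5 : r = -4 → 5 ≤ n)
    (d : ℤ) (hd : d = (n : ℤ) ^ 2 + r) (hd1 : 1 < d) (hsf : Squarefree d)
    {s : ℝ} (hs2 : s ^ 2 = (d:ℝ)) (hspos : 0 < s) (hirr : Irrational s)
    (w : ℝ) (hw : ∃ a b : ℚ, w = a + b * s) (hw1 : 1 < w)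
    (hint : IsIntegral ℤ w) (hinv : IsIntegral ℤ w⁻¹) :
    ((n:ℝ) + s)/2 ≤ w := by
  obtain ⟨a, b, rfl⟩ := hw
  by_cases hb : b = 0
  · exfalso
    subst hb
    simp only [Rat.cast_zero, zero_mul, add_zero] at hw1 hint hinv
    have ha1 : 1 < a := by exact_mod_cast hw1
    have ha0 : a ≠ 0 := by positivity
    obtain ⟨z, hz⟩ := DegHelp.rat_int hint
    obtain ⟨z', hz'⟩ := DegHelp.rat_int (x := a⁻¹) (by push_cast; exact hinv)
    have hzz' : z * z' = 1 := by
      have : (z:ℚ) * (z':ℚ) = 1 := by rw [hz, hz']; field_simp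
      exact_mod_cast this
    have hz2 : 2 ≤ z := by
      have : (1:ℚ) < z := by rw [hz]; exact ha1
      exact_mod_cast this
    have := Int.isUnit_iff.mp (IsUnit.of_mul_eq_one _ hzz')
    omega
  · obtain ⟨P, Q, N, hNu, hP, hQ, hkey⟩ := DegHelp.unit_ext hd1 hsf hs2 hirr hb hint hinv
    have hPr : (P:ℝ) = 2*(a:ℝ) := by exact_mod_cast hP
    have hQr : (Q:ℝ) = 2*(b:ℝ) := by exact_mod_cast hQ
    have hweq : (a:ℝ) + (b:ℝ)*s = ((P:ℝ) + (Q:ℝ)*s)/2 := by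
      rw [hPr, hQr]; ring
    rw [hweq] at hw1 ⊢
    set w := ((P:ℝ) + (Q:ℝ)*s)/2 with hwdef
    set w' : ℝ := ((P:ℝ) - (Q:ℝ)*s)/2 with hw'def
    have hkr : (P:ℝ)^2 - (d:ℝ)*(Q:ℝ)^2 = 4*(N:ℝ) := by exact_mod_cast hkey
    have hww' : w * w' = (N:ℝ) := by
      rw [hwdef, hw'def]
      linear_combination (-(1/4)*(Q:ℝ)^2) * hs2 + (1/4)*hkr
    have hNr : (N:ℝ) = 1 ∨ (N:ℝ) = -1 := by
      rcases hNu with h | h <;> [left; right] <;> rw [h] <;> norm_num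
    have hw'lt : w' < 1 := by
      rcases hNr with h | h <;> rw [h] at hww' <;> nlinarith [hw1, hww']
    have hw'gt : -1 < w' := by
      rcases hNr with h | h <;> rw [h] at hww' <;> nlinarith [hw1, hww']
    have hQpos : 1 ≤ Q := by
      have hQR : (0:ℝ) < (Q:ℝ) := by
        by_contra hcon
        push_neg at hcon
        have h1 : (Q:ℝ) * s ≤ 0 := mul_nonpos_of_nonpos_of_nonneg hcon hspos.le
        have h2 : 0 < (Q:ℝ) * s := by
          have : w' < w := by linarith
          rw [hwdef, hw'def] at this; linarith
        linarith
      exact_mod_cast hQR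
    have hPpos : 1 ≤ P := by
      have : (0:ℝ) < (P:ℝ) := by
        have : 0 < w + w' := by linarith
        rw [hwdef, hw'def] at this; linarith
      exact_mod_cast this
    rcases eq_or_lt_of_le hQpos with hQ1 | hQ2
    · -- Q = 1
      have hQr1 : (Q:ℝ) = 1 := by exact_mod_cast hQ1.symm
      have hPn : (n:ℤ) ≤ P := by
        rw [hQ1.symm] at hkey
        rcases hr with h4 | h4 <;> subst h4 <;> rcases hNu with hN1 | hN1 <;>
            subst hN1 <;> rw [hd] at hkey
        · -- r = 4, N = 1 : P² = n² + 8
          by_contra hcon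
          push_neg at hcon
          nlinarith [hkey, hcon, hPpos]
        · -- r = 4, N = -1 : P² = n²
          by_contra hcon
          push_neg at hcon
          nlinarith [hkey, hcon, hPpos]
        · -- r = -4, N = 1 : P² = n²
          by_contra hcon
          push_neg at hcon
          nlinarith [hkey, hcon, hPpos]
        · -- r = -4, N = -1 : P² = n² - 8, impossible
          exfalso
          have hn5' : (5:ℤ) ≤ (n:ℤ) := by exact_mod_cast hn5 rfl
          rcases le_or_gt (n:ℤ) P with h | h
          · nlinarith [hkey, h, hPpos]
          · have h8 : ((n:ℤ) - P)*((n:ℤ) + P) = 8 := by linear_combination -hkey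
            have h1 : 1 ≤ (n:ℤ) - P := by omega
            have h6 : 6 ≤ (n:ℤ) + P := by omega
            have h2' : (n:ℤ) - P ≤ 1 := by nlinarith
            have hnp : (n:ℤ) - P = 1 := le_antisymm h2' h1
            have h9 : (n:ℤ) + P = 8 := by
              rcases (by omega : (n:ℤ) = P + 1) with h
              rw [h] at h8; linarith [h8]
            omega
      have hPnR : (n:ℝ) ≤ (P:ℝ) := by exact_mod_cast hPn
      rw [hwdef, hQr1]
      linarith
    · -- Q ≥ 2
      have hQ2R : (2:ℝ) ≤ (Q:ℝ) := by exact_mod_cast hQ2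
      have hdgt : ((n:ℤ)-1)^2 < d := by
        rcases hr with h4 | h4 <;> subst h4 <;> rw [hd]
        · nlinarith [hn]
        · have := hn5 rfl; nlinarith [this]
      have hdgtR : ((n:ℝ)-1)^2 < s^2 := by
        rw [hs2]
        exact_mod_cast hdgt
      have hsgt : (n:ℝ) - 1 < s := by
        nlinarith [hspos, hn, hdgtR]
      rw [hwdef]
      have hPR : (1:ℝ) ≤ (P:ℝ) := by exact_mod_cast hPpos
      nlinarith [hspos, hsgt, hPR, hQ2R, mul_nonneg (sub_nonneg.mpr hQ2R) hspos.le]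


set_option maxHeartbeats 1000000 in
/-- Degert's theorem, case `|r| = 4`: for `d = n² + r` squarefree with `r = ±4` (and `n ≥ 5`
when `r = −4`), the real number `ε = (n + √d)/2` is the fundamental unit of `ℚ(√d)`: it is an
algebraic integer, a unit of the ring of integers (its inverse is also integral), `ε > 1`,
every unit `u` of the ring of integers of `ℚ(√d)` equals `±ε^m` for some `m : ℤ`, and its
norm `ε·ε′` equals `−sgn r`. -/
theorem fundamentalUnit_abs_r_eq_four
    (n : ℕ) (hn : 0 < n) (r : ℤ) (hr : r = 4 ∨ r = -4) (hn5 : r = -4 → 5 ≤ n)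
    (d : ℤ) (hd : d = (n : ℤ) ^ 2 + r) (hd1 : 1 < d) (hsf : Squarefree d) :
    IsIntegral ℤ (((n : ℝ) + Real.sqrt d) / 2) ∧
    IsIntegral ℤ (((n : ℝ) + Real.sqrt d) / 2)⁻¹ ∧
    1 < ((n : ℝ) + Real.sqrt d) / 2 ∧
    (∀ u : ℝ, (∃ a b : ℚ, u = a + b * Real.sqrt d) → u ≠ 0 →
      IsIntegral ℤ u → IsIntegral ℤ u⁻¹ →
      ∃ m : ℤ, u = (((n : ℝ) + Real.sqrt d) / 2) ^ m ∨
        u = -(((n : ℝ) + Real.sqrt d) / 2) ^ m) ∧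
    (((n : ℝ) + Real.sqrt d) / 2) * (((n : ℝ) - Real.sqrt d) / 2) = -((r.sign : ℤ) : ℝ) := by
  have hd0 : (0:ℝ) ≤ (d:ℝ) := by
    have : (1:ℝ) < (d:ℝ) := by exact_mod_cast hd1
    linarith
  set s : ℝ := Real.sqrt (d:ℝ) with hs
  have hs2 : s^2 = (d:ℝ) := Real.sq_sqrt hd0
  have hirr : Irrational s := DegHelp.sqrt_irr hd1 hsf
  have hs1 : 1 < s := by
    nlinarith [Real.sqrt_nonneg (d:ℝ), hs2, (by exact_mod_cast hd1 : (1:ℝ) < (d:ℝ))]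
  have hspos : 0 < s := by linarith
  set ε : ℝ := ((n:ℝ) + s)/2 with hε
  have hnR : (1:ℝ) ≤ (n:ℝ) := by exact_mod_cast hn
  have hε1 : 1 < ε := by rw [hε]; linarith
  have hεpos : 0 < ε := by linarith
  have hεne : ε ≠ 0 := ne_of_gt hεpos
  have hdR : (d:ℝ) = (n:ℝ)^2 + (r:ℝ) := by rw [hd]; push_cast; ring
  have hε_int : IsIntegral ℤ ε := by
    rcases hr with h4 | h4 <;> subst h4
    · refine DegHelp.int_of_quad (-(n:ℤ)) (-1) ?_
      push_cast
      rw [hε]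
      linear_combination (1/4)*hs2 + (1/4)*hdR
    · refine DegHelp.int_of_quad (-(n:ℤ)) 1 ?_
      push_cast
      rw [hε]
      linear_combination (1/4)*hs2 + (1/4)*hdR
  have hεinv : (ε⁻¹ = (s - (n:ℝ))/2 ∧ r = 4) ∨ (ε⁻¹ = ((n:ℝ) - s)/2 ∧ r = -4) := by
    rcases hr with h4 | h4 <;> subst h4 <;> [left; right] <;> refine ⟨?_, rfl⟩
    · refine (eq_inv_of_mul_eq_one_right ?_).symm
      rw [hε]
      linear_combination (1/4)*hs2 + (1/4)*hdR
    · refine (eq_inv_of_mul_eq_one_right ?_).symm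
      rw [hε]
      linear_combination -(1/4)*hs2 - (1/4)*hdR
  have hεinv_int : IsIntegral ℤ ε⁻¹ := by
    rcases hεinv with ⟨heq, h4⟩ | ⟨heq, h4⟩ <;> rw [heq] <;> subst h4
    · refine DegHelp.int_of_quad ((n:ℤ)) (-1) ?_
      push_cast
      linear_combination (1/4)*hs2 + (1/4)*hdR
    · refine DegHelp.int_of_quad (-(n:ℤ)) 1 ?_
      push_cast
      linear_combination (1/4)*hs2 + (1/4)*hdR
  have hεinvS : ∃ a b : ℚ, ε⁻¹ = (a:ℝ) + (b:ℝ)*s := by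
    rcases hεinv with ⟨heq, h4⟩ | ⟨heq, h4⟩ <;> rw [heq]
    · exact ⟨-(n/2 : ℚ), (1/2 : ℚ), by push_cast; ring⟩
    · exact ⟨(n/2 : ℚ), -(1/2 : ℚ), by push_cast; ring⟩
  have hεS : ∃ a b : ℚ, ε = (a:ℝ) + (b:ℝ)*s := ⟨(n/2 : ℚ), (1/2 : ℚ), by rw [hε]; push_cast; ring⟩
  have hmulS : ∀ x y : ℝ, (∃ a b : ℚ, x = (a:ℝ) + (b:ℝ)*s) → (∃ a b : ℚ, y = (a:ℝ) + (b:ℝ)*s) →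
      (∃ a b : ℚ, x*y = (a:ℝ) + (b:ℝ)*s) := by
    rintro x y ⟨a, b, rfl⟩ ⟨c, e, rfl⟩
    refine ⟨a*c + (d:ℚ)*b*e, a*e + b*c, ?_⟩
    push_cast
    linear_combination (b:ℝ)*(e:ℝ)*hs2
  have hpowS : ∀ (k:ℕ) (x:ℝ), (∃ a b : ℚ, x = (a:ℝ) + (b:ℝ)*s) →
      (∃ a b : ℚ, x^k = (a:ℝ) + (b:ℝ)*s) := by
    intro k
    induction k with
    | zero => exact fun x _ => ⟨1, 0, by norm_num⟩
    | succ k ih =>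
      intro x hx
      rw [pow_succ]
      exact hmulS _ _ (ih x hx) hx
  have hzpowS : ∀ m : ℤ, ∃ a b : ℚ, ε^m = (a:ℝ) + (b:ℝ)*s := by
    intro m
    rcases m with k | k
    · simpa using hpowS k ε hεS
    · rw [zpow_negSucc, ← inv_pow]
      exact hpowS (k+1) ε⁻¹ hεinvS
  have hzpow_int : ∀ m : ℤ, IsIntegral ℤ (ε^m) := by
    intro m
    rcases m with k | k
    · simpa using hε_int.pow k
    · rw [zpow_negSucc, ← inv_pow]
      exact hεinv_int.pow (k+1)
  have key : ∀ v : ℝ, (∃ a b : ℚ, v = (a:ℝ) + (b:ℝ)*s) → 0 < v →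
      IsIntegral ℤ v → IsIntegral ℤ v⁻¹ → ∃ m : ℤ, v = ε^m := by
    intro v hvS hv0 hvi hvi'
    obtain ⟨m, hm1, hm2⟩ := exists_mem_Ico_zpow hv0 hε1
    refine ⟨m, ?_⟩
    have hεm : (0:ℝ) < ε^m := zpow_pos hεpos m
    have hW1 : 1 ≤ v * ε^(-m) := by
      rw [zpow_neg, ← div_eq_mul_inv]
      exact (one_le_div hεm).mpr hm1
    have hWlt : v * ε^(-m) < ε := by
      rw [zpow_neg, ← div_eq_mul_inv, div_lt_iff₀ hεm]
      calc v < ε^(m+1) := hm2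
        _ = ε * ε^m := by rw [zpow_add_one₀ hεne]; ring
    have hWS := hmulS v (ε^(-m)) hvS (hzpowS (-m))
    have hWi : IsIntegral ℤ (v * ε^(-m)) := hvi.mul (hzpow_int (-m))
    have hWi' : IsIntegral ℤ (v * ε^(-m))⁻¹ := by
      rw [mul_inv, zpow_neg, inv_inv]
      exact hvi'.mul (hzpow_int m)
    rcases eq_or_lt_of_le hW1 with h1 | h1
    · rw [zpow_neg, ← div_eq_mul_inv] at h1
      field_simp at h1
      linarith [h1]
    · have hmin := DegHelp.min_lemma n hn r hr hn5 d hd hd1 hsf hs2 hspos hirr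
        (v * ε^(-m)) hWS h1 hWi hWi'
      rw [← hε] at hmin
      linarith
  refine ⟨hε_int, hεinv_int, hε1, ?_, ?_⟩
  · intro u huS hu0 hui hui'
    rcases hu0.lt_or_gt with hneg | hpos
    · obtain ⟨a, b, hab⟩ := huS
      obtain ⟨m, hm⟩ := key (-u) ⟨-a, -b, by rw [hab]; push_cast; ring⟩ (by linarith)
        hui.neg (by rw [inv_neg]; exact hui'.neg)
      exact ⟨m, Or.inr (by linarith [hm])⟩
    · obtain ⟨m, hm⟩ := key u huS hpos hui hui'
      exact ⟨m, Or.inl hm⟩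
  · rcases hr with h4 | h4 <;> subst h4 <;> rw [hε]
    · norm_num [show (4:ℤ).sign = 1 from rfl]
      linear_combination -(1/4)*hs2 - (1/4)*hdR
    · norm_num [show (-4:ℤ).sign = -1 from rfl]
      linear_combination -(1/4)*hs2 - (1/4)*hdR
end

section
/- Let n be a positive integer and r a nonzero integer with r dividing 4n, −n < r ≤ n, and |r| ∉ {1, 4}, and suppose d = n² + r is squarefree with d > 1. Then ε = (2n² + r)/|r| + (2n/|r|)·√d lies in the ring of integers O of ℚ(√d) and is its fundamental unit: ε > 1, every unit of O equals ε^m or −ε^m for some integer m, and the norm N(ε) = ε·ε′ equals 1. -/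
open Polynomial in
lemma rd_coeffs_int (w : ℝ) (hw : IsIntegral ℤ w) (hirr : Irrational w)
    (a c : ℚ) (hroot : w ^ 2 + (a : ℝ) * w + (c : ℝ) = 0) :
    (∃ za : ℤ, (za : ℚ) = a) ∧ ∃ zc : ℤ, (zc : ℚ) = c := by
  set p : ℚ[X] := X ^ 2 + (C a * X + C c) with hp
  have hdeglt : (C a * X + C c).degree < (X ^ 2 : ℚ[X]).degree := by
    refine lt_of_le_of_lt (degree_linear_le) ?_
    rw [degree_X_pow]; norm_num
  have hpmonic : p.Monic := (monic_X_pow 2).add_of_left hdeglt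
  have hpdeg : p.natDegree = 2 := by
    have h2 : p.degree = 2 := by
      rw [hp, Polynomial.degree_add_eq_left_of_degree_lt hdeglt, Polynomial.degree_X_pow]
      rfl
    exact Polynomial.natDegree_eq_of_degree_eq_some h2
  have haev : (Polynomial.aeval w) p = 0 := by
    simp only [hp, map_add, map_pow, map_mul, aeval_X, aeval_C]
    rw [show (algebraMap ℚ ℝ) a = (a : ℝ) from by norm_num [algebraMap],
      show (algebraMap ℚ ℝ) c = (c : ℝ) from by norm_num [algebraMap]]
    linarith [hroot]
  have hwQ : IsIntegral ℚ w := hw.tower_top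
  have hdvd : minpoly ℚ w ∣ p := minpoly.dvd ℚ w haev
  have hple : p.natDegree ≤ (minpoly ℚ w).natDegree := by
    rw [hpdeg]
    refine (minpoly.two_le_natDegree_iff hwQ).mpr ?_
    intro hmem
    obtain ⟨q, hq⟩ := hmem
    exact hirr ⟨q, by rw [← hq]; norm_num [algebraMap]⟩
  have hpq : p = minpoly ℚ w :=
    Polynomial.eq_of_monic_of_dvd_of_natDegree_le (minpoly.monic hwQ) hpmonic hdvd hple
  have hmap : minpoly ℚ w = (minpoly ℤ w).map (algebraMap ℤ ℚ) :=
    minpoly.isIntegrallyClosed_eq_field_fractions' ℚ hw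
  have h1 : p.coeff 1 = ((minpoly ℤ w).coeff 1 : ℚ) := by
    rw [hpq, hmap, coeff_map]; norm_num [algebraMap]
  have h0 : p.coeff 0 = ((minpoly ℤ w).coeff 0 : ℚ) := by
    rw [hpq, hmap, coeff_map]; norm_num [algebraMap]
  have hc1 : p.coeff 1 = a := by simp [hp, coeff_X_pow]
  have hc0 : p.coeff 0 = c := by simp [hp, coeff_X_pow]
  exact ⟨⟨(minpoly ℤ w).coeff 1, by rw [← h1, hc1]⟩,
    ⟨(minpoly ℤ w).coeff 0, by rw [← h0, hc0]⟩⟩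

lemma rd_den_one (d : ℤ) (hsf : Squarefree d) (q : ℚ) (z : ℤ)
    (h : (d : ℚ) * q ^ 2 = (z : ℚ)) : ∃ m : ℤ, (m : ℚ) = q := by
  have hden : ((q.den : ℚ)) ≠ 0 := by
    exact_mod_cast q.den_ne_zero
  have hnum : (q.num : ℚ) = q * q.den := by
    exact (Rat.mul_den_eq_num q).symm
  have hZ : d * q.num ^ 2 = z * (q.den : ℤ) ^ 2 := by
    have : (d : ℚ) * (q.num : ℚ) ^ 2 = (z : ℚ) * (q.den : ℚ) ^ 2 := by
      rw [hnum]; ring_nf; rw [show (d:ℚ) * q ^2 * (q.den:ℚ)^2 = ((d:ℚ)*q^2) * (q.den:ℚ)^2 from by ring, h]; ring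
    exact_mod_cast this
  have hdvd : ((q.den : ℤ)) ^ 2 ∣ d * q.num ^ 2 := ⟨z, by linarith⟩
  have hcop : IsCoprime (q.num) ((q.den : ℤ)) := by
    rw [Int.isCoprime_iff_gcd_eq_one]
    exact_mod_cast q.reduced
  have hcop2 : IsCoprime (((q.den : ℤ)) ^ 2) (q.num ^ 2) := (hcop.symm.pow)
  have hdvd2 : ((q.den : ℤ)) ^ 2 ∣ d := hcop2.dvd_of_dvd_mul_right hdvd
  have hunit : IsUnit ((q.den : ℤ)) := hsf _ (by rwa [← pow_two])
  have hone : (q.den : ℤ) = 1 := by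
    rcases Int.isUnit_iff.mp hunit with h1 | h1
    · exact h1
    · exfalso; have := q.den_pos; omega
  refine ⟨q.num, ?_⟩
  have : (q.den : ℚ) = 1 := by exact_mod_cast hone
  rw [← Rat.num_div_den q, this, div_one]
  norm_num

set_option maxHeartbeats 1000000 in
lemma rd_core (n r d x y e : ℤ)
    (hn : 2 ≤ n) (hr0 : r ≠ 0) (hdvd : r ∣ 4 * n)
    (hlt : -n < r) (hle : r ≤ n)
    (habs1 : r.natAbs ≠ 1) (habs4 : r.natAbs ≠ 4)
    (hd : d = n ^ 2 + r) (hsf : Squarefree d)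
    (hx : 1 ≤ x) (hy : 1 ≤ y) (hyy : |r| * y < 4 * n)
    (he : e = 4 ∨ e = -4) (heq : x ^ 2 - d * y ^ 2 = e) : False := by
  have hra : 1 ≤ |r| := by rcases abs_cases r with ⟨h, _⟩ | ⟨h, _⟩ <;> omega
  have habs : |r| * y ≤ 4 * n - |r| := by
    have h1 : |r| ∣ 4 * n := (abs_dvd r (4 * n)).mpr hdvd
    have h2 : |r| ∣ 4 * n - |r| * y := dvd_sub h1 ⟨y, rfl⟩
    have h3 : 0 < 4 * n - |r| * y := by linarith
    have h4 := Int.le_of_dvd h3 h2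
    linarith
  have hkey : x ^ 2 - (n * y) ^ 2 = r * y ^ 2 + e := by
    linear_combination heq + y ^ 2 * hd
  rcases lt_trichotomy (x - n * y) 0 with hs | hs | hs
  · -- x ≤ n*y - 1
    rcases eq_or_lt_of_le (show x - n * y ≤ -1 by omega) with hs1 | hs2
    · -- x = n*y - 1
      have hx' : x = n * y - 1 := by omega
      have h5 : y * (r * y + 2 * n) = 1 - e := by
        rw [hx'] at hkey; linear_combination -hkey
      rcases he with rfl | rfl
      · have hyd : y ∣ 3 := ⟨-(r * y + 2 * n), by linarith⟩
        have hy3 : y ≤ 3 := Int.le_of_dvd (by norm_num) hyd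
        interval_cases y
        · omega
        · omega
        · -- 3r + 2n = -1
          have h6 : 3 * r + 2 * n = -1 := by linarith
          have h8 : r ∣ 6 * r + 2 := by
            rw [show (6 * r + 2 : ℤ) = -(4 * n) by linarith]
            exact dvd_neg.mpr hdvd
          have h7 : r ∣ 2 := (dvd_add_right ⟨6, by ring⟩).mp h8
          have h10 : r.natAbs ∣ 2 := by
            rw [← Int.natAbs_dvd_natAbs] at h7; exact_mod_cast h7
          have h11 : r.natAbs ≤ 2 := Nat.le_of_dvd (by norm_num) h10
          omega
      · have hyd : y ∣ 5 := ⟨r * y + 2 * n, by linarith⟩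
        have hy5 : y ≤ 5 := Int.le_of_dvd (by norm_num) hyd
        interval_cases y
        · -- r = 5 - 2n
          have h6 : r = 5 - 2 * n := by linarith
          have h7 : n < 5 := by omega
          interval_cases n
          · omega
          · omega
          · rw [h6] at hdvd; norm_num at hdvd
        · omega
        · omega
        · omega
        · -- 5r + 2n = 1
          have h6 : 5 * r + 2 * n = 1 := by linarith
          have h8 : r ∣ -10 * r + 2 := by
            rw [show (-10 * r + 2 : ℤ) = 4 * n by linarith]
            exact hdvd
          have h7 : r ∣ 2 := by
            have h9 : r ∣ 10 * r := ⟨10, by ring⟩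
            have := dvd_add h8 h9
            rwa [show (-10 * r + 2 + 10 * r : ℤ) = 2 by ring] at this
          have h10 : r.natAbs ∣ 2 := by
            rw [← Int.natAbs_dvd_natAbs] at h7; exact_mod_cast h7
          have h11 : r.natAbs ≤ 2 := Nat.le_of_dvd (by norm_num) h10
          omega
    · -- x ≤ n*y - 2
      have hx2 : x ≤ n * y - 2 := by omega
      have hb : r * y ^ 2 + e ≤ -4 * n * y + 4 := by nlinarith
      have hrneg : r < 0 := by
        by_contra hc
        push_neg at hc
        have h1 : 0 ≤ r * y ^ 2 := mul_nonneg hc (sq_nonneg y)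
        have h2 : (8 : ℤ) ≤ 4 * n * y := by nlinarith
        rcases he with rfl | rfl <;> nlinarith
      have habs' : |r| = -r := abs_of_neg hrneg
      rw [habs'] at habs hyy hra
      have hq2 : 4 * n * y - 8 ≤ -r * y ^ 2 := by
        rcases he with rfl | rfl <;> nlinarith
      have hq3 : -r * y ^ 2 ≤ (4 * n - -r) * y := by nlinarith
      have hq4 : -r * y ≤ 8 := by nlinarith
      have h1y : y ≤ -r * y := by nlinarith
      have hn4 : n ≤ 4 := by nlinarith
      interval_cases n
      · omega
      · -- n = 3 : r = -2
        have h6 : r = -2 := by omega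
        subst h6
        have h7 : y ≤ 4 := by omega
        interval_cases y <;> norm_num at hq2
      · -- n = 4
        have h6 : r = -2 ∨ r = -3 := by omega
        rcases h6 with rfl | rfl
        · have h7 : y ≤ 4 := by omega
          interval_cases y <;> norm_num at hq2
        · norm_num at hdvd
  · -- x = n*y
    have hx' : x = n * y := by omega
    have h5 : r * y ^ 2 = -e := by
      rw [hx'] at hkey; linarith
    have h6 : y ≤ 2 := by
      by_contra hc
      push_neg at hc
      have hy9 : (9 : ℤ) ≤ y ^ 2 := by nlinarith
      rcases le_or_gt 0 r with h1 | h1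
      · have h2 : 1 ≤ r := by omega
        have h3 : y ^ 2 ≤ r * y ^ 2 := le_mul_of_one_le_left (by positivity) h2
        rcases he with rfl | rfl <;> linarith
      · have h2 : r ≤ -1 := by omega
        have h3 := mul_le_mul_of_nonneg_right h2 (sq_nonneg y)
        rcases he with rfl | rfl <;> linarith
    interval_cases y <;> rcases he with rfl | rfl <;> norm_num at h5 <;> omega
  · -- x ≥ n*y + 1
    rcases eq_or_lt_of_le (show 1 ≤ x - n * y by omega) with hs1 | hs2
    · -- x = n*y + 1
      have hx' : x = n * y + 1 := by omega
      have h5 : y * (r * y - 2 * n) = 1 - e := by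
        rw [hx'] at hkey; linear_combination -hkey
      rcases he with rfl | rfl
      · have hyd : y ∣ 3 := ⟨-(r * y - 2 * n), by linarith⟩
        have hy3 : y ≤ 3 := Int.le_of_dvd (by norm_num) hyd
        interval_cases y
        · -- r = 2n - 3
          have h6 : r = 2 * n - 3 := by linarith
          have h7 : n ≤ 3 := by omega
          interval_cases n
          · omega
          · -- n = 3, r = 3, d = 12
            have hd12 : d = 12 := by omega
            have h8 := hsf 2 (by rw [hd12]; norm_num)
            rw [Int.isUnit_iff] at h8
            omega
        · omega
        · -- 3r - 2n = -1
          have h6 : 3 * r - 2 * n = -1 := by linarith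
          have h8 : r ∣ 6 * r + 2 := by
            rw [show (6 * r + 2 : ℤ) = 4 * n by linarith]
            exact hdvd
          have h7 : r ∣ 2 := (dvd_add_right ⟨6, by ring⟩).mp h8
          have h10 : r.natAbs ∣ 2 := by
            rw [← Int.natAbs_dvd_natAbs] at h7; exact_mod_cast h7
          have h11 : r.natAbs ≤ 2 := Nat.le_of_dvd (by norm_num) h10
          omega
      · have hyd : y ∣ 5 := ⟨r * y - 2 * n, by linarith⟩
        have hy5 : y ≤ 5 := Int.le_of_dvd (by norm_num) hyd
        interval_cases y
        · omega
        · omega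
        · omega
        · omega
        · -- 5r - 2n = 1
          have h6 : 5 * r - 2 * n = 1 := by linarith
          have h8 : r ∣ 10 * r - 2 := by
            rw [show (10 * r - 2 : ℤ) = 4 * n by linarith]
            exact hdvd
          have h7 : r ∣ 2 := by
            have h9 : r ∣ 10 * r := ⟨10, by ring⟩
            have := dvd_sub h9 h8
            rwa [show (10 * r - (10 * r - 2) : ℤ) = 2 by ring] at this
          have h10 : r.natAbs ∣ 2 := by
            rw [← Int.natAbs_dvd_natAbs] at h7; exact_mod_cast h7
          have h11 : r.natAbs ≤ 2 := Nat.le_of_dvd (by norm_num) h10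
          omega
    · -- x ≥ n*y + 2
      have hx2 : n * y + 2 ≤ x := by omega
      have hny : (0 : ℤ) ≤ n * y + 2 := by nlinarith
      have hsq := pow_le_pow_left₀ hny hx2 2
      have hb : 4 * n * y + 4 ≤ r * y ^ 2 + e := by nlinarith [hsq]
      have hb2 : r * y ^ 2 ≤ |r| * y * y := by
        rcases abs_cases r with ⟨h1, _⟩ | ⟨h1, _⟩ <;> nlinarith
      rcases he with rfl | rfl <;> nlinarith

lemma rd_norm_trace_int (d : ℤ) (hd0 : (0:ℝ) ≤ (d:ℝ))
    (hirr : Irrational (Real.sqrt d))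
    (w : ℝ) (p q : ℚ) (hq : q ≠ 0) (hw : w = (p : ℝ) + (q : ℝ) * Real.sqrt d)
    (hwint : IsIntegral ℤ w) :
    (∃ z1 : ℤ, (z1 : ℚ) = 2 * p) ∧ ∃ z2 : ℤ, (z2 : ℚ) = p ^ 2 - d * q ^ 2 := by
  have hds : Real.sqrt d ^ 2 = (d : ℝ) := Real.sq_sqrt hd0
  have hirw : Irrational w := by
    rw [hw]; exact (hirr.ratCast_mul hq).ratCast_add p
  have hroot : w ^ 2 + ((-(2 * p) : ℚ) : ℝ) * w + ((p ^ 2 - d * q ^ 2 : ℚ) : ℝ) = 0 := by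
    rw [hw]; push_cast
    linear_combination ((q : ℝ)) ^ 2 * hds
  obtain ⟨⟨z1, hz1⟩, ⟨z2, hz2⟩⟩ := rd_coeffs_int w hwint hirw _ _ hroot
  exact ⟨⟨-z1, by push_cast [hz1]; linarith [hz1]⟩, ⟨z2, hz2⟩⟩

lemma rd_unit_rep (d : ℤ) (hd1 : 1 < d) (hsf : Squarefree d)
    (hirr : Irrational (Real.sqrt d))
    (u : ℝ) (a b : ℚ) (hu : u = (a : ℝ) + (b : ℝ) * Real.sqrt d) (hu0 : u ≠ 0)
    (hint : IsIntegral ℤ u) (hinv : IsIntegral ℤ u⁻¹) :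
    ∃ x y : ℤ, u = ((x : ℝ) + (y : ℝ) * Real.sqrt d) / 2 ∧
      (x ^ 2 - d * y ^ 2 = 4 ∨ x ^ 2 - d * y ^ 2 = -4) := by
  have hd0 : (0 : ℝ) ≤ (d : ℝ) := by
    have : (1 : ℝ) < (d : ℝ) := by exact_mod_cast hd1
    linarith
  have hds : Real.sqrt d ^ 2 = (d : ℝ) := Real.sq_sqrt hd0
  by_cases hb : b = 0
  · -- rational case
    subst hb
    rw [Rat.cast_zero, zero_mul, add_zero] at hu
    have ha0 : a ≠ 0 := by rintro rfl; rw [Rat.cast_zero] at hu; exact hu0 hu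
    have h1 : IsIntegral ℤ a := by
      have := hu ▸ hint
      rwa [show ((a : ℝ)) = algebraMap ℚ ℝ a from rfl,
        isIntegral_algebraMap_iff (algebraMap ℚ ℝ).injective] at this
    have h2 : IsIntegral ℤ (a⁻¹) := by
      have h3 : u⁻¹ = ((a⁻¹ : ℚ) : ℝ) := by rw [hu]; push_cast; ring
      have := h3 ▸ hinv
      rwa [show ((a⁻¹ : ℚ) : ℝ) = algebraMap ℚ ℝ a⁻¹ from rfl,
        isIntegral_algebraMap_iff (algebraMap ℚ ℝ).injective] at this
    obtain ⟨za, hza⟩ := IsIntegrallyClosed.isIntegral_iff.mp h1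
    obtain ⟨zb, hzb⟩ := IsIntegrallyClosed.isIntegral_iff.mp h2
    have hza' : (za : ℚ) = a := (eq_intCast (algebraMap ℤ ℚ) za).symm.trans hza
    have hzb' : (zb : ℚ) = a⁻¹ := (eq_intCast (algebraMap ℤ ℚ) zb).symm.trans hzb
    have hmul : za * zb = 1 := by
      have : ((za * zb : ℤ) : ℚ) = 1 := by
        push_cast [hza', hzb']
        field_simp
      exact_mod_cast this
    have hza1 : za = 1 ∨ za = -1 := Int.isUnit_iff.mp (IsUnit.of_mul_eq_one _ hmul)
    refine ⟨2 * za, 0, ?_, ?_⟩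
    · rw [hu, ← hza']; push_cast; ring
    · rcases hza1 with rfl | rfl <;> norm_num
  · -- irrational case
    obtain ⟨⟨za, hza⟩, ⟨zc, hzc⟩⟩ := rd_norm_trace_int d hd0 hirr u a b hb hu hint
    have hN0 : a ^ 2 - (d : ℚ) * b ^ 2 ≠ 0 := by
      intro h0
      have hb' : (b : ℝ) ≠ 0 := by exact_mod_cast hb
      have h1 : (a : ℝ) ^ 2 - (d : ℝ) * (b : ℝ) ^ 2 = 0 := by exact_mod_cast h0
      have hq : ((a / b : ℚ) : ℝ) ^ 2 = Real.sqrt d ^ 2 := by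
        rw [hds]; push_cast
        field_simp
        linarith
      have h2 : (Real.sqrt d - ((a / b : ℚ) : ℝ)) * (Real.sqrt d + ((a / b : ℚ) : ℝ)) = 0 := by
        linear_combination -hq
      rcases mul_eq_zero.mp h2 with h | h
      · exact hirr ⟨a / b, by linarith⟩
      · refine hirr ⟨-(a / b), ?_⟩
        rw [Rat.cast_neg]; linarith
    -- inverse representation
    have hNR0 : (a : ℝ) ^ 2 - (d : ℝ) * (b : ℝ) ^ 2 ≠ 0 := by
      intro h0
      apply hN0
      exact_mod_cast h0
    have h9 : u * ((a : ℝ) - (b : ℝ) * Real.sqrt d) = (a : ℝ) ^ 2 - (d : ℝ) * (b : ℝ) ^ 2 := by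
      rw [hu]; linear_combination (-((b : ℝ) ^ 2)) * hds
    have h10 : u⁻¹ = ((a : ℝ) - (b : ℝ) * Real.sqrt d) / ((a : ℝ) ^ 2 - (d : ℝ) * (b : ℝ) ^ 2) := by
      rw [eq_div_iff hNR0, ← h9, ← mul_assoc, inv_mul_cancel₀ hu0, one_mul]
    have hb2 : -b / (a ^ 2 - d * b ^ 2) ≠ 0 := by
      apply div_ne_zero _ hN0
      simpa using hb
    have hu2 : u⁻¹ = ((a / (a ^ 2 - d * b ^ 2) : ℚ) : ℝ) +
        ((-b / (a ^ 2 - d * b ^ 2) : ℚ) : ℝ) * Real.sqrt d := by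
      rw [h10]; push_cast; ring
    obtain ⟨_, ⟨ze, hze⟩⟩ := rd_norm_trace_int d hd0 hirr u⁻¹ _ _ hb2 hu2 hinv
    have hze' : (ze : ℚ) = 1 / (a ^ 2 - d * b ^ 2) := by
      rw [hze]
      field_simp
    have hNpm : zc = 1 ∨ zc = -1 := by
      have hmul : zc * ze = 1 := by
        have : ((zc * ze : ℤ) : ℚ) = 1 := by
          push_cast [hzc, hze']
          field_simp
        exact_mod_cast this
      exact Int.isUnit_iff.mp (IsUnit.of_mul_eq_one _ hmul)
    -- extract y
    have hyq : (d : ℚ) * (2 * b) ^ 2 = ((za * za - 4 * zc : ℤ) : ℚ) := by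
      push_cast
      linear_combination (-((za : ℚ) + 2 * a)) * hza + 4 * hzc
    obtain ⟨zy, hzy⟩ := rd_den_one d hsf (2 * b) _ hyq
    refine ⟨za, zy, ?_, ?_⟩
    · rw [hu]
      have h1 : ((za : ℤ) : ℝ) = 2 * (a : ℝ) := by exact_mod_cast hza
      have h2 : ((zy : ℤ) : ℝ) = 2 * (b : ℝ) := by exact_mod_cast hzy
      rw [h1, h2]; ring
    · have hq : ((za ^ 2 - d * zy ^ 2 : ℤ) : ℚ) = 4 * (zc : ℚ) := by
        push_cast
        linear_combination ((za : ℚ) + 2 * a) * hza - (d : ℚ) * ((zy : ℚ) + 2 * b) * hzy - 4 * hzc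
      have hq2 : za ^ 2 - d * zy ^ 2 = 4 * zc := by exact_mod_cast hq
      rcases hNpm with rfl | rfl
      · left; omega
      · right; omega

def RDU (d : ℤ) (w : ℝ) : Prop :=
  (∃ a b : ℚ, w = (a : ℝ) + (b : ℝ) * Real.sqrt d) ∧ w ≠ 0 ∧
    IsIntegral ℤ w ∧ IsIntegral ℤ w⁻¹

open Polynomial in
lemma rd_int_quad (t : ℝ) (c1 c0 : ℤ) (h : t ^ 2 + (c1 : ℝ) * t + (c0 : ℝ) = 0) :
    IsIntegral ℤ t := by
  refine ⟨X ^ 2 + (C c1 * X + C c0), ?_, ?_⟩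
  · have hdeglt : (C c1 * X + C c0).degree < (X ^ 2 : ℤ[X]).degree := by
      refine lt_of_le_of_lt (degree_linear_le) ?_
      rw [degree_X_pow]; norm_num
    exact (monic_X_pow 2).add_of_left hdeglt
  · simp only [eval₂_add, eval₂_mul, eval₂_pow, eval₂_X, eval₂_C]
    rw [show (algebraMap ℤ ℝ) c1 = (c1 : ℝ) from by norm_num [algebraMap],
      show (algebraMap ℤ ℝ) c0 = (c0 : ℝ) from by norm_num [algebraMap]]
    linarith [h]

lemma rdu_mul {d : ℤ} (hd0 : (0 : ℝ) ≤ (d : ℝ)) {v w : ℝ}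
    (hv : RDU d v) (hw : RDU d w) : RDU d (v * w) := by
  obtain ⟨⟨a1, b1, h1⟩, hv0, hvi, hvi'⟩ := hv
  obtain ⟨⟨a2, b2, h2⟩, hw0, hwi, hwi'⟩ := hw
  have hds : Real.sqrt d ^ 2 = (d : ℝ) := Real.sq_sqrt hd0
  refine ⟨⟨a1 * a2 + b1 * b2 * d, a1 * b2 + a2 * b1, ?_⟩, mul_ne_zero hv0 hw0,
    hvi.mul hwi, ?_⟩
  · rw [h1, h2]; push_cast
    linear_combination ((b1 : ℝ) * (b2 : ℝ)) * hds
  · rw [mul_inv]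
    exact hvi'.mul hwi'

lemma rdu_inv {d : ℤ} (hd0 : (0 : ℝ) ≤ (d : ℝ)) (hirr : Irrational (Real.sqrt d))
    {w : ℝ} (hw : RDU d w) : RDU d w⁻¹ := by
  obtain ⟨⟨a, b, hab⟩, hw0, hwi, hwi'⟩ := hw
  refine ⟨?_, inv_ne_zero hw0, hwi', by rw [inv_inv]; exact hwi⟩
  by_cases hb : b = 0
  · subst hb
    refine ⟨a⁻¹, 0, ?_⟩
    rw [hab]; push_cast; ring
  · have hN0 : a ^ 2 - (d : ℚ) * b ^ 2 ≠ 0 := by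
      intro h0
      have hb' : (b : ℝ) ≠ 0 := by exact_mod_cast hb
      have h1 : (a : ℝ) ^ 2 - (d : ℝ) * (b : ℝ) ^ 2 = 0 := by exact_mod_cast h0
      have hds : Real.sqrt d ^ 2 = (d : ℝ) := Real.sq_sqrt hd0
      have hq : ((a / b : ℚ) : ℝ) ^ 2 = Real.sqrt d ^ 2 := by
        rw [hds]; push_cast
        field_simp
        linarith
      have h2 : (Real.sqrt d - ((a / b : ℚ) : ℝ)) * (Real.sqrt d + ((a / b : ℚ) : ℝ)) = 0 := by
        linear_combination -hq
      rcases mul_eq_zero.mp h2 with h | h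
      · exact hirr ⟨a / b, by linarith⟩
      · refine hirr ⟨-(a / b), ?_⟩
        rw [Rat.cast_neg]; linarith
    have hNR0 : (a : ℝ) ^ 2 - (d : ℝ) * (b : ℝ) ^ 2 ≠ 0 := by
      intro h0; apply hN0; exact_mod_cast h0
    have hds : Real.sqrt d ^ 2 = (d : ℝ) := Real.sq_sqrt hd0
    have h9 : w * ((a : ℝ) - (b : ℝ) * Real.sqrt d) = (a : ℝ) ^ 2 - (d : ℝ) * (b : ℝ) ^ 2 := by
      rw [hab]; linear_combination (-((b : ℝ) ^ 2)) * hds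
    have h10 : w⁻¹ = ((a : ℝ) - (b : ℝ) * Real.sqrt d) / ((a : ℝ) ^ 2 - (d : ℝ) * (b : ℝ) ^ 2) := by
      rw [eq_div_iff hNR0, ← h9, ← mul_assoc, inv_mul_cancel₀ hw0, one_mul]
    exact ⟨a / (a ^ 2 - d * b ^ 2), -b / (a ^ 2 - d * b ^ 2), by rw [h10]; push_cast; ring⟩

lemma rdu_one (d : ℤ) : RDU d 1 :=
  ⟨⟨1, 0, by push_cast; ring⟩, one_ne_zero, isIntegral_one, by rw [inv_one]; exact isIntegral_one⟩

lemma rdu_pow {d : ℤ} (hd0 : (0 : ℝ) ≤ (d : ℝ)) {w : ℝ} (hw : RDU d w) :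
    ∀ k : ℕ, RDU d (w ^ k)
  | 0 => by rw [pow_zero]; exact rdu_one d
  | (k + 1) => by rw [pow_succ]; exact rdu_mul hd0 (rdu_pow hd0 hw k) hw

lemma rdu_zpow {d : ℤ} (hd0 : (0 : ℝ) ≤ (d : ℝ)) (hirr : Irrational (Real.sqrt d))
    {w : ℝ} (hw : RDU d w) : ∀ m : ℤ, RDU d (w ^ m)
  | Int.ofNat k => by rw [Int.ofNat_eq_coe, zpow_natCast]; exact rdu_pow hd0 hw k
  | Int.negSucc k => by rw [zpow_negSucc]; exact rdu_inv hd0 hirr (rdu_pow hd0 hw (k + 1))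

lemma rdu_neg {d : ℤ} {w : ℝ} (hw : RDU d w) : RDU d (-w) := by
  obtain ⟨⟨a, b, hab⟩, hw0, hwi, hwi'⟩ := hw
  refine ⟨⟨-a, -b, by rw [hab]; push_cast; ring⟩, neg_ne_zero.mpr hw0, hwi.neg, ?_⟩
  rw [inv_neg]
  exact hwi'.neg

set_option maxHeartbeats 1000000 in
/-- Degert's theorem, case `|r| ∉ {1, 4}`: for a Richaud–Degert radicand `d = n² + r`
squarefree (`r ∣ 4n`, `−n < r ≤ n`, `|r| ∉ {1, 4}`, `d > 1`), the real number
`ε = (2n² + r)/|r| + (2n/|r|)·√d` is the fundamental unit of `ℚ(√d)`. -/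
theorem fundamentalUnit_wide_RD
    (n : ℕ) (hn : 0 < n) (r : ℤ) (hr0 : r ≠ 0) (hdvd : r ∣ 4 * (n : ℤ))
    (hlt : -(n : ℤ) < r) (hle : r ≤ (n : ℤ))
    (habs1 : r.natAbs ≠ 1) (habs4 : r.natAbs ≠ 4)
    (d : ℤ) (hd : d = (n : ℤ) ^ 2 + r) (hd1 : 1 < d) (hsf : Squarefree d) :
    IsIntegral ℤ ((2 * (n : ℝ) ^ 2 + r) / |(r : ℝ)| + 2 * n / |(r : ℝ)| * Real.sqrt d) ∧
    IsIntegral ℤ ((2 * (n : ℝ) ^ 2 + r) / |(r : ℝ)| + 2 * n / |(r : ℝ)| * Real.sqrt d)⁻¹ ∧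
    1 < (2 * (n : ℝ) ^ 2 + r) / |(r : ℝ)| + 2 * n / |(r : ℝ)| * Real.sqrt d ∧
    (∀ u : ℝ, (∃ a b : ℚ, u = a + b * Real.sqrt d) → u ≠ 0 →
      IsIntegral ℤ u → IsIntegral ℤ u⁻¹ →
      ∃ m : ℤ,
        u = ((2 * (n : ℝ) ^ 2 + r) / |(r : ℝ)| + 2 * n / |(r : ℝ)| * Real.sqrt d) ^ m ∨
        u = -((2 * (n : ℝ) ^ 2 + r) / |(r : ℝ)| + 2 * n / |(r : ℝ)| * Real.sqrt d) ^ m) ∧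
    ((2 * (n : ℝ) ^ 2 + r) / |(r : ℝ)| + 2 * n / |(r : ℝ)| * Real.sqrt d) *
      ((2 * (n : ℝ) ^ 2 + r) / |(r : ℝ)| - 2 * n / |(r : ℝ)| * Real.sqrt d) = 1 := by
  -- basic integer facts
  have hn2 : 2 ≤ (n : ℤ) := by omega
  have hra : 1 ≤ |r| := by rcases abs_cases r with ⟨h, _⟩ | ⟨h, _⟩ <;> omega
  have hrle : |r| ≤ (n : ℤ) := by rcases abs_cases r with ⟨h, _⟩ | ⟨h, _⟩ <;> omega
  have hd6 : 6 ≤ d := by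
    rcases eq_or_lt_of_le hn2 with h2 | h3
    · have hr2 : r = 2 := by omega
      rw [hd, ← h2, hr2]; norm_num
    · nlinarith [sq_nonneg ((n : ℤ) - 3)]
  have hdz0 : (0 : ℤ) ≤ d := by omega
  have hd0 : (0 : ℝ) ≤ (d : ℝ) := by exact_mod_cast hdz0
  have hs2 : Real.sqrt d ^ 2 = (d : ℝ) := Real.sq_sqrt hd0
  have hs0 : 0 < Real.sqrt d := Real.sqrt_pos.mpr (by exact_mod_cast (by omega : (0:ℤ) < d))
  have hdR6 : (6 : ℝ) ≤ (d : ℝ) := by exact_mod_cast hd6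
  have hs2' : 2 < Real.sqrt d := by
    nlinarith [hs2, hs0, hdR6]
  -- irrationality
  have hnsq : ¬IsSquare d := by
    rintro ⟨k, hk⟩
    have h1 := hsf k (by rw [hk])
    rw [Int.isUnit_iff] at h1
    rcases h1 with rfl | rfl <;> omega
  have hirr : Irrational (Real.sqrt d) :=
    (irrational_sqrt_intCast_iff_of_nonneg hdz0).mpr hnsq
  -- the integers X0, Y0
  obtain ⟨Y0, hY0⟩ : |r| ∣ 4 * (n : ℤ) := (abs_dvd r (4 * n)).mpr hdvd
  obtain ⟨X0, hX0⟩ : |r| ∣ 4 * (n : ℤ) ^ 2 + 2 * r := by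
    refine (abs_dvd r _).mpr (dvd_add ?_ ⟨2, by ring⟩)
    have h1 := hdvd.mul_right (n : ℤ)
    rwa [show 4 * (n : ℤ) * n = 4 * n ^ 2 by ring] at h1
  have hY0pos : 1 ≤ Y0 := by nlinarith [hY0, hra, hn2]
  have hX06 : 6 ≤ X0 := by nlinarith [hX0, hra, hrle, hn2, hlt]
  have hXY : X0 ^ 2 - d * Y0 ^ 2 = 4 := by
    have hsa : |r| ^ 2 = r ^ 2 := sq_abs r
    refine mul_left_cancel₀ (pow_ne_zero 2 hr0) ?_
    calc r ^ 2 * (X0 ^ 2 - d * Y0 ^ 2)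
        = (|r| * X0) ^ 2 - d * (|r| * Y0) ^ 2 := by rw [mul_pow, mul_pow, hsa]; ring
      _ = (4 * (n : ℤ) ^ 2 + 2 * r) ^ 2 - d * (4 * n) ^ 2 := by rw [← hX0, ← hY0]
      _ = r ^ 2 * 4 := by rw [hd]; ring
  -- real versions
  have hrR0 : |(r : ℝ)| ≠ 0 := by
    simp only [ne_eq, abs_eq_zero]
    exact_mod_cast hr0
  have hc1 : 4 * (n : ℝ) ^ 2 + 2 * r = |(r : ℝ)| * X0 := by exact_mod_cast hX0
  have hc2 : 4 * (n : ℝ) = |(r : ℝ)| * Y0 := by exact_mod_cast hY0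
  have hE : (2 * (n : ℝ) ^ 2 + r) / |(r : ℝ)| + 2 * n / |(r : ℝ)| * Real.sqrt d =
      ((X0 : ℝ) + (Y0 : ℝ) * Real.sqrt d) / 2 := by
    have e1 : (2 * (n : ℝ) ^ 2 + r) / |(r : ℝ)| = (X0 : ℝ) / 2 := by
      rw [div_eq_div_iff hrR0 two_ne_zero]
      linear_combination hc1
    have e2 : 2 * (n : ℝ) / |(r : ℝ)| = (Y0 : ℝ) / 2 := by
      rw [div_eq_div_iff hrR0 two_ne_zero]
      linear_combination hc2
    rw [e1, e2]; ring
  have hE' : (2 * (n : ℝ) ^ 2 + r) / |(r : ℝ)| - 2 * n / |(r : ℝ)| * Real.sqrt d =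
      ((X0 : ℝ) - (Y0 : ℝ) * Real.sqrt d) / 2 := by
    have e1 : (2 * (n : ℝ) ^ 2 + r) / |(r : ℝ)| = (X0 : ℝ) / 2 := by
      rw [div_eq_div_iff hrR0 two_ne_zero]
      linear_combination hc1
    have e2 : 2 * (n : ℝ) / |(r : ℝ)| = (Y0 : ℝ) / 2 := by
      rw [div_eq_div_iff hrR0 two_ne_zero]
      linear_combination hc2
    rw [e1, e2]; ring
  have hXYR : ((X0 : ℝ)) ^ 2 - (d : ℝ) * (Y0 : ℝ) ^ 2 = 4 := by exact_mod_cast hXY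
  have hX0R : (6 : ℝ) ≤ (X0 : ℝ) := by exact_mod_cast hX06
  have hY0R : (1 : ℝ) ≤ (Y0 : ℝ) := by exact_mod_cast hY0pos
  set E0 : ℝ := ((X0 : ℝ) + (Y0 : ℝ) * Real.sqrt d) / 2 with hE0
  set E0' : ℝ := ((X0 : ℝ) - (Y0 : ℝ) * Real.sqrt d) / 2 with hE0'
  have hE0gt : 1 < E0 := by
    rw [hE0]; nlinarith [hs0]
  have hE0pos : 0 < E0 := lt_trans one_pos hE0gt
  have hEE' : E0 * E0' = 1 := by
    rw [hE0, hE0']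
    linear_combination (1 / 4) * hXYR - ((Y0 : ℝ) ^ 2 / 4) * hs2
  have hE0inv : E0⁻¹ = E0' := inv_eq_of_mul_eq_one_right hEE'
  have hE0'pos : 0 < E0' := by
    rw [← hE0inv]; exact inv_pos.mpr hE0pos
  have hE0'lt : E0' < 1 := by
    rw [← hE0inv]
    rw [inv_lt_one_iff₀]
    right; exact hE0gt
  have hIntE : IsIntegral ℤ E0 := by
    refine rd_int_quad E0 (-X0) 1 ?_
    push_cast
    rw [hE0]
    linear_combination ((Y0 : ℝ) ^ 2 / 4) * hs2 - (1 / 4) * hXYR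
  have hIntE' : IsIntegral ℤ E0' := by
    refine rd_int_quad E0' (-X0) 1 ?_
    push_cast
    rw [hE0']
    linear_combination ((Y0 : ℝ) ^ 2 / 4) * hs2 - (1 / 4) * hXYR
  have hIntEinv : IsIntegral ℤ E0⁻¹ := by rw [hE0inv]; exact hIntE'
  have hE0ne : E0 ≠ 0 := ne_of_gt hE0pos
  -- E0 is in the unit group
  have hPE : RDU d E0 := by
    refine ⟨⟨(X0 : ℚ) / 2, (Y0 : ℚ) / 2, ?_⟩, hE0ne, hIntE, hIntEinv⟩
    rw [hE0]; push_cast; ring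
  -- minimality
  have hPmin : ∀ w : ℝ, RDU d w → 1 < w → E0 ≤ w := by
    intro w hPw hw1
    by_contra hc
    push_neg at hc
    obtain ⟨⟨a, b, hab⟩, hw0, hwi, hwi'⟩ := hPw
    obtain ⟨x, y, hxy, he⟩ := rd_unit_rep d hd1 hsf hirr w a b hab hw0 hwi hwi'
    set w' : ℝ := ((x : ℝ) - (y : ℝ) * Real.sqrt d) / 2 with hw'
    have hww' : w * w' = ((x ^ 2 - d * y ^ 2 : ℤ) : ℝ) / 4 := by
      rw [hxy, hw']
      push_cast
      linear_combination (-((y : ℝ) ^ 2) / 4) * hs2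
    have hw'bound : -1 < w' ∧ w' < 1 := by
      have hwpos : 0 < w := lt_trans one_pos hw1
      rcases he with he | he
      · rw [he] at hww'
        have h1 : w * w' = 1 := by
          rw [hww']; norm_num
        have h2 : w' = w⁻¹ := by
          field_simp at h1 ⊢
          linarith [h1]
        constructor
        · rw [h2]
          have : 0 < w⁻¹ := inv_pos.mpr hwpos
          linarith
        · rw [h2]
          rw [inv_lt_one_iff₀]; right; exact hw1
      · rw [he] at hww'
        have h1 : w * w' = -1 := by
          rw [hww']; norm_num
        have h2 : w' = -w⁻¹ := by
          have h3 : w ≠ 0 := ne_of_gt hwpos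
          field_simp at h1 ⊢
          linarith [h1]
        constructor
        · rw [h2]
          have : w⁻¹ < 1 := by rw [inv_lt_one_iff₀]; right; exact hw1
          linarith
        · rw [h2]
          have : 0 < w⁻¹ := inv_pos.mpr hwpos
          linarith
    obtain ⟨hw'gt, hw'lt⟩ := hw'bound
    have hxsum : (x : ℝ) = w + w' := by rw [hxy, hw']; ring
    have hydiff : (y : ℝ) * Real.sqrt d = w - w' := by rw [hxy, hw']; ring
    have hx1 : 1 ≤ x := by
      have : (0 : ℝ) < (x : ℝ) := by rw [hxsum]; linarith
      have h0 : (0 : ℤ) < x := by exact_mod_cast this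
      omega
    have hy1 : 1 ≤ y := by
      have h1 : (0 : ℝ) < (y : ℝ) * Real.sqrt d := by rw [hydiff]; linarith
      have h2 : (0 : ℝ) < (y : ℝ) := by nlinarith [hs0]
      have h0 : (0 : ℤ) < y := by exact_mod_cast h2
      omega
    -- y ≤ Y0
    have hyY0 : y ≤ Y0 := by
      by_contra hcy
      push_neg at hcy
      have h1 : (Y0 : ℝ) + 1 ≤ (y : ℝ) := by exact_mod_cast hcy
      have h2 : (y : ℝ) * Real.sqrt d < E0 + 1 := by
        rw [hydiff]; linarith
      have h3 : (Y0 : ℝ) * Real.sqrt d = E0 - E0' := by rw [hE0, hE0']; ring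
      nlinarith [hs0, hE0'pos, hs2']
    rcases eq_or_lt_of_le hyY0 with rfl | hylt
    · -- y = Y0
      rcases he with he | he
      · have h1 : x ^ 2 = X0 ^ 2 := by linarith [he, hXY]
        have h2 : (x - X0) * (x + X0) = 0 := by linear_combination h1
        rcases mul_eq_zero.mp h2 with h3 | h3
        · have hxX0 : x = X0 := by omega
          rw [hxX0] at hxy
          rw [hxy] at hc
          rw [hE0] at hc
          linarith
        · omega
      · have h1 : x ^ 2 = X0 ^ 2 - 8 := by linarith [he, hXY]
        rcases le_or_gt X0 x with h3 | h3
        · nlinarith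
        · have h4 : x ≤ X0 - 1 := by omega
          nlinarith
    · -- y < Y0
      have hyy : |r| * y < 4 * (n : ℤ) := by
        have h1 : |r| * y ≤ |r| * (Y0 - 1) :=
          mul_le_mul_of_nonneg_left (by omega) (abs_nonneg r)
        nlinarith [hY0, hra]
      exact rd_core (n : ℤ) r d x y _ hn2 hr0 hdvd hlt hle habs1 habs4 hd hsf hx1 hy1 hyy he rfl
  -- assemble
  rw [hE, hE']
  refine ⟨hIntE, hIntEinv, hE0gt, ?_, hEE'⟩
  intro u hrep hu0 hint hinv
  have hPu : RDU d u := ⟨hrep, hu0, hint, hinv⟩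
  have hPv : RDU d |u| := by
    rcases abs_cases u with ⟨h1, _⟩ | ⟨h1, _⟩
    · rw [h1]; exact hPu
    · rw [h1]; exact rdu_neg hPu
  have hv0 : 0 < |u| := abs_pos.mpr hu0
  obtain ⟨m, hm1, hm2⟩ := exists_mem_Ico_zpow hv0 hE0gt
  have hEm : 0 < E0 ^ m := zpow_pos hE0pos m
  set w : ℝ := |u| * (E0 ^ m)⁻¹ with hwdef
  have hPw : RDU d w := by
    rw [hwdef, show (E0 ^ m)⁻¹ = E0 ^ (-m) from (zpow_neg E0 m).symm]
    exact rdu_mul hd0 hPv (rdu_zpow hd0 hirr hPE (-m))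
  have hw1 : 1 ≤ w := by
    rw [hwdef, ← div_eq_mul_inv]
    rw [le_div_iff₀ hEm, one_mul]
    exact hm1
  have hwE : w < E0 := by
    rw [hwdef, ← div_eq_mul_inv, div_lt_iff₀ hEm]
    calc |u| < E0 ^ (m + 1) := hm2
    _ = E0 * E0 ^ m := by rw [zpow_add_one₀ hE0ne]; ring
  rcases eq_or_lt_of_le hw1 with hweq | hwgt
  · have hv : |u| = E0 ^ m := by
      have h1 : w * E0 ^ m = |u| := by
        rw [hwdef]; field_simp
      rw [← hweq, one_mul] at h1
      exact h1.symm
    rcases abs_cases u with ⟨h1, _⟩ | ⟨h1, _⟩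
    · exact ⟨m, Or.inl (by rw [← h1, hv])⟩
    · refine ⟨m, Or.inr ?_⟩
      rw [hv] at h1
      linarith [h1]
  · exact absurd (hPmin w hPw hwgt) (not_le.mpr hwE)
end
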